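/- arXiv:2006.14101 — 10 statements merged into one kernel-verified Lean document; each statement's English description precedes it below -/
import Mathlib

section
/- Let B be a real Banach space with dual space B*, let ν₁, …, ν_m ∈ B* be linearly independent, and let y ∈ ℝ^m. Then f̂ ∈ B is a solution of the minimum norm interpolation problem with data y if and only if f̂ ∈ M_y and there exist c₁, …, c_m ∈ ℝ such that Σ_{j=1}^m c_j ν_j ∈ ∂‖·‖_B(f̂). -/
/-- `f̂` is a solution of the minimum norm interpolation problem with
data `y` iff `f̂ ∈ M_y` and some linear combination `Σ c_j ν_j` belongs to the
subdifferential of the norm at `f̂`. -/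
theorem minimum_norm_interpolation_iff_subdifferential
    {B : Type*} [NormedAddCommGroup B] [NormedSpace ℝ B] [CompleteSpace B]
    {m : ℕ} (ν : Fin m → (B →L[ℝ] ℝ)) (hν : LinearIndependent ℝ ν)
    (y : Fin m → ℝ) (fhat : B) :
    ((∀ j, ν j fhat = y j) ∧ ∀ f : B, (∀ j, ν j f = y j) → ‖fhat‖ ≤ ‖f‖) ↔
      ((∀ j, ν j fhat = y j) ∧ ∃ c : Fin m → ℝ,
        ∀ g : B, (∑ j, c j • ν j) (g - fhat) ≤ ‖g‖ - ‖fhat‖) := by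
  constructor
  · rintro ⟨hy, hmin⟩
    refine ⟨hy, ?_⟩
    by_cases hz : fhat = 0
    · refine ⟨0, fun g => ?_⟩
      simp [hz]
    -- the common kernel
    set N : Submodule ℝ B := ⨅ j, LinearMap.ker (ν j : B →ₗ[ℝ] ℝ) with hN
    have hNclosed : IsClosed (N : Set B) := by
      have : (N : Set B) = ⋂ j, (LinearMap.ker (ν j : B →ₗ[ℝ] ℝ) : Set B) := by
        simp [hN, Submodule.coe_iInf]
      rw [this]
      exact isClosed_iInter fun j => ContinuousLinearMap.isClosed_ker (ν j)
    have memN : ∀ z : B, z ∈ N ↔ ∀ j, ν j z = 0 := by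
      intro z; simp [hN, Submodule.mem_iInf, LinearMap.mem_ker]
    -- norm of the image of fhat in the quotient equals ‖fhat‖
    have hnorm : ‖(Submodule.Quotient.mk fhat : B ⧸ N)‖ = ‖fhat‖ := by
      refine le_antisymm (Submodule.Quotient.norm_mk_le N fhat) ?_
      have h2 : ‖(Submodule.Quotient.mk fhat : B ⧸ N)‖
          = ‖(QuotientAddGroup.mk' N.toAddSubgroup) fhat‖ := rfl
      rw [h2, quotient_norm_mk_eq]
      refine le_csInf ⟨‖fhat + 0‖, Set.mem_image_of_mem _ N.zero_mem⟩ ?_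
      rintro b ⟨z, hzmem, rfl⟩
      refine hmin _ fun j => ?_
      have hz0 : ν j z = 0 := (memN z).1 hzmem j
      simp [map_add, hz0, hy j]
    have hne : (Submodule.Quotient.mk fhat : B ⧸ N) ≠ 0 := by
      intro h
      apply hz
      have := hnorm
      rw [h, norm_zero] at this
      exact norm_eq_zero.1 this.symm
    obtain ⟨g, hg1, hgx⟩ := exists_dual_vector ℝ _ (norm_ne_zero_iff.2 hne)
    -- the composed functional
    set K : B →ₗ[ℝ] ℝ := g.toLinearMap ∘ₗ N.mkQ with hK
    have hker : (⨅ j, LinearMap.ker ((ν j : B →ₗ[ℝ] ℝ))) ≤ LinearMap.ker K := by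
      intro z hzmem
      have hzN : z ∈ N := by
        rw [memN]
        intro j
        have := Submodule.mem_iInf (fun j => LinearMap.ker ((ν j : B →ₗ[ℝ] ℝ))) |>.1 hzmem j
        exact this
      have : N.mkQ z = 0 := by
        rw [Submodule.mkQ_apply, Submodule.Quotient.mk_eq_zero]
        exact hzN
      simp [hK, LinearMap.mem_ker, this]
    have hspan : K ∈ Submodule.span ℝ (Set.range fun j => ((ν j : B →ₗ[ℝ] ℝ))) :=
      mem_span_of_iInf_ker_le_ker hker
    obtain ⟨c, hc⟩ := (Submodule.mem_span_range_iff_exists_fun ℝ).1 hspan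
    refine ⟨c, fun g' => ?_⟩
    have happ : (∑ j, c j • ν j) (g' - fhat) = K (g' - fhat) := by
      rw [← hc]
      simp [ContinuousLinearMap.sum_apply]
    rw [happ]
    have hKval : ∀ z : B, K z = g (Submodule.Quotient.mk z) := fun z => rfl
    have hKfhat : K fhat = ‖fhat‖ := by rw [hKval, hgx, hnorm]; norm_cast
    have hKg' : K g' ≤ ‖g'‖ := by
      rw [hKval]
      calc g (Submodule.Quotient.mk g') ≤ ‖g (Submodule.Quotient.mk g')‖ := le_abs_self _
        _ ≤ ‖g‖ * ‖(Submodule.Quotient.mk g' : B ⧸ N)‖ := g.le_opNorm _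
        _ ≤ 1 * ‖g'‖ := by
            rw [hg1]
            exact mul_le_mul_of_nonneg_left (Submodule.Quotient.norm_mk_le N g') zero_le_one
        _ = ‖g'‖ := one_mul _
    rw [map_sub, hKfhat]
    linarith
  · rintro ⟨hy, c, hc⟩
    refine ⟨hy, fun f hf => ?_⟩
    have h0 : (∑ j, c j • ν j) (f - fhat) = 0 := by
      simp only [ContinuousLinearMap.sum_apply, ContinuousLinearMap.smul_apply, map_sub]
      have : ∀ j, ν j f - ν j fhat = 0 := fun j => by rw [hf j, hy j, sub_self]
      rw [← Finset.sum_sub_distrib]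
      refine Finset.sum_eq_zero fun j _ => ?_
      rw [← smul_sub, this j, smul_zero]
    have := hc f
    rw [h0] at this
    linarith
end

section
/- Let B be a smooth real Banach space with dual space B*, let ν₁, …, ν_m ∈ B* be linearly independent, and let y ∈ ℝ^m. Then f̂ ∈ B is a solution of the minimum norm interpolation problem with data y if and only if f̂ ∈ M_y and there exist c₁, …, c_m ∈ ℝ such that G(f̂) = Σ_{j=1}^m c_j ν_j. -/
open Filter Topology

/-- In a smooth Banach space `B` (where `G f` is the Gâteaux derivative
of the norm at `f ≠ 0`, and `G 0 = 0` by convention), `f̂` is a solution of the minimum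
norm interpolation problem with data `y` iff `f̂ ∈ M_y` and `G(f̂)` is a linear
combination of the functionals `ν_j`. -/
theorem minimum_norm_interpolation_iff_gateaux
    {B : Type*} [NormedAddCommGroup B] [NormedSpace ℝ B] [CompleteSpace B]
    (G : B → (B →L[ℝ] ℝ)) (hG0 : G 0 = 0)
    (hG : ∀ f : B, f ≠ 0 → ∀ h : B,
      Tendsto (fun t : ℝ => (‖f + t • h‖ - ‖f‖) / t) (𝓝[≠] (0 : ℝ)) (𝓝 (G f h)))
    {m : ℕ} (ν : Fin m → (B →L[ℝ] ℝ)) (hν : LinearIndependent ℝ ν)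
    (y : Fin m → ℝ) (fhat : B) :
    ((∀ j, ν j fhat = y j) ∧ ∀ f : B, (∀ j, ν j f = y j) → ‖fhat‖ ≤ ‖f‖) ↔
      ((∀ j, ν j fhat = y j) ∧ ∃ c : Fin m → ℝ, G fhat = ∑ j, c j • ν j) := by
  constructor
  · rintro ⟨hmem, hmin⟩
    refine ⟨hmem, ?_⟩
    by_cases h0 : fhat = 0
    · exact ⟨0, by simp [h0, hG0]⟩
    have hker : ∀ h : B, (∀ j, ν j h = 0) → G fhat h = 0 := by
      intro h hh
      have hmy : ∀ t : ℝ, ‖fhat‖ ≤ ‖fhat + t • h‖ := by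
        intro t
        apply hmin
        intro j
        simp [map_add, (ν j).map_smul, hh j, hmem j]
      have htend := hG fhat h0 h
      have hge : 0 ≤ G fhat h := by
        have h1 : Tendsto (fun t : ℝ => (‖fhat + t • h‖ - ‖fhat‖) / t)
            (𝓝[>] (0:ℝ)) (𝓝 (G fhat h)) :=
          htend.mono_left (nhdsWithin_mono _ (fun t ht => ne_of_gt ht))
        refine ge_of_tendsto h1 ?_
        filter_upwards [self_mem_nhdsWithin] with t ht
        exact div_nonneg (by linarith [hmy t]) (le_of_lt ht)
      have hle : G fhat h ≤ 0 := by
        have h1 : Tendsto (fun t : ℝ => (‖fhat + t • h‖ - ‖fhat‖) / t)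
            (𝓝[<] (0:ℝ)) (𝓝 (G fhat h)) :=
          htend.mono_left (nhdsWithin_mono _ (fun t ht => ne_of_lt ht))
        refine le_of_tendsto h1 ?_
        filter_upwards [self_mem_nhdsWithin] with t ht
        exact div_nonpos_of_nonneg_of_nonpos (by linarith [hmy t]) (le_of_lt ht)
      linarith
    have hspan : (G fhat : B →ₗ[ℝ] ℝ) ∈
        Submodule.span ℝ (Set.range (fun j => ((ν j : B →ₗ[ℝ] ℝ)))) := by
      apply mem_span_of_iInf_ker_le_ker
      intro x hx
      simp only [Submodule.mem_iInf, LinearMap.mem_ker] at hx ⊢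
      exact hker x (fun j => hx j)
    obtain ⟨c, hc⟩ := (Submodule.mem_span_range_iff_exists_fun ℝ).1 hspan
    refine ⟨c, ?_⟩
    ext x
    have := LinearMap.congr_fun hc x
    simpa using this.symm
  · rintro ⟨hmem, c, hc⟩
    refine ⟨hmem, ?_⟩
    by_cases h0 : fhat = 0
    · intro f _; simp [h0]
    intro f hf
    have htendf := hG fhat h0 fhat
    have hGf : G fhat fhat = ‖fhat‖ := by
      have heq : (fun t : ℝ => (‖fhat + t • fhat‖ - ‖fhat‖) / t) =ᶠ[𝓝[≠] (0:ℝ)]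
          (fun _ => ‖fhat‖) := by
        have hIoo : Set.Ioo (-1 : ℝ) 1 ∈ 𝓝 (0:ℝ) := Ioo_mem_nhds (by norm_num) (by norm_num)
        filter_upwards [nhdsWithin_le_nhds hIoo, self_mem_nhdsWithin] with t ht ht0
        have h1 : (0:ℝ) < 1 + t := by have := ht.1; linarith
        have he : fhat + t • fhat = (1 + t) • fhat := by rw [add_smul, one_smul, add_comm]
        rw [he, norm_smul, Real.norm_eq_abs, abs_of_pos h1]
        have ht0' : (t:ℝ) ≠ 0 := ht0
        field_simp
        ring
      exact tendsto_nhds_unique htendf (tendsto_const_nhds.congr' heq.symm)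
    have hub : ∀ h : B, G fhat h ≤ ‖h‖ := by
      intro h
      have h1 : Tendsto (fun t : ℝ => (‖fhat + t • h‖ - ‖fhat‖) / t)
          (𝓝[>] (0:ℝ)) (𝓝 (G fhat h)) :=
        (hG fhat h0 h).mono_left (nhdsWithin_mono _ (fun t ht => ne_of_gt ht))
      refine le_of_tendsto h1 ?_
      filter_upwards [self_mem_nhdsWithin] with t ht
      have : ‖fhat + t • h‖ ≤ ‖fhat‖ + t * ‖h‖ := by
        calc ‖fhat + t • h‖ ≤ ‖fhat‖ + ‖t • h‖ := norm_add_le _ _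
        _ = ‖fhat‖ + t * ‖h‖ := by rw [norm_smul, Real.norm_eq_abs, abs_of_pos ht]
      rw [div_le_iff₀ ht]
      linarith
    have happ : ∀ x : B, G fhat x = ∑ j, c j * ν j x := by
      intro x
      rw [hc]
      simp
    have hsame : G fhat f = G fhat fhat := by
      rw [happ f, happ fhat]
      refine Finset.sum_congr rfl (fun j _ => ?_)
      rw [hf j, hmem j]
    calc ‖fhat‖ = G fhat f := by rw [hsame, hGf]
    _ ≤ ‖f‖ := hub f
end

section
/- Let B be a real Banach space with dual space B* and canonical embedding J : B → B**, let ν₁, …, ν_m ∈ B* be linearly independent, and let y ∈ ℝ^m. Then f̂ ∈ B is a solution of the minimum norm interpolation problem with data y if and only if f̂ ∈ M_y and there exist c₁, …, c_m ∈ ℝ such that, with ν := Σ_{j=1}^m c_j ν_j and γ := ‖ν‖_{B*}, there is w ∈ ∂‖·‖_{B*}(ν) with J(f̂) = γ · w. -/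
set_option maxHeartbeats 1000000


/-- Explicit representer theorem: `f̂` is a solution of the minimum norm
interpolation problem with data `y` iff `f̂ ∈ M_y` and there exist coefficients `c_j`
such that, with `ν := Σ c_j ν_j` and `γ := ‖ν‖`, one has `J(f̂) = γ • w` for some `w`
in the subdifferential of the dual norm at `ν`. -/
theorem minimum_norm_interpolation_iff_dual_subdifferential
    {B : Type*} [NormedAddCommGroup B] [NormedSpace ℝ B] [CompleteSpace B]
    {m : ℕ} (ν : Fin m → (B →L[ℝ] ℝ)) (hν : LinearIndependent ℝ ν)
    (y : Fin m → ℝ) (fhat : B) :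
    ((∀ j, ν j fhat = y j) ∧ ∀ f : B, (∀ j, ν j f = y j) → ‖fhat‖ ≤ ‖f‖) ↔
      ((∀ j, ν j fhat = y j) ∧ ∃ c : Fin m → ℝ,
        ∃ w : StrongDual ℝ (StrongDual ℝ B),
          (∀ μ : B →L[ℝ] ℝ, w (μ - ∑ j, c j • ν j) ≤ ‖μ‖ - ‖∑ j, c j • ν j‖) ∧
          NormedSpace.inclusionInDoubleDual ℝ B fhat = ‖∑ j, c j • ν j‖ • w) := by
  constructor
  · rintro ⟨hint, hmin⟩
    refine ⟨hint, ?_⟩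
    by_cases hf : fhat = 0
    · refine ⟨0, 0, fun μ => ?_, ?_⟩
      · simp
      · simp [hf]
    have hfpos : (0 : ℝ) < ‖fhat‖ := norm_pos_iff.mpr hf
    -- the common kernel
    set N : Submodule ℝ B := ⨅ j, LinearMap.ker (ν j : B →ₗ[ℝ] ℝ) with hN
    have hNmem : ∀ n : B, n ∈ N → ∀ j, ν j n = 0 := by
      intro n hn j
      rw [hN, Submodule.mem_iInf] at hn
      exact hn j
    haveI hNclosed : IsClosed (N : Set B) := by
      rw [hN, Submodule.coe_iInf]
      exact isClosed_iInter fun j => ContinuousLinearMap.isClosed_ker (ν j)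
    -- the quotient norm of `fhat` equals `‖fhat‖`
    have hq : ‖(Submodule.Quotient.mk fhat : B ⧸ N)‖ = ‖fhat‖ := by
      refine le_antisymm (Submodule.Quotient.norm_mk_le N fhat) ?_
      refine le_of_forall_pos_le_add fun ε hε => ?_
      obtain ⟨a, ha, hlt⟩ := Submodule.Quotient.norm_mk_lt
        (Submodule.Quotient.mk fhat : B ⧸ N) hε
      have hmemN : a - fhat ∈ N := (Submodule.Quotient.eq N).mp ha
      have hinterp : ∀ j, ν j a = y j := by
        intro j
        have := hNmem _ hmemN j
        have : ν j a - ν j fhat = 0 := by rw [← map_sub]; exact this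
        have h2 := hint j
        linarith
      exact (hmin a hinterp).trans hlt.le
    -- dual vector in the quotient
    obtain ⟨g, hg1, hgx⟩ := exists_dual_vector'' ℝ (Submodule.Quotient.mk fhat : B ⧸ N)
    -- the functional μ = g ∘ mk
    set mkc : B →L[ℝ] (B ⧸ N) :=
      N.mkQ.mkContinuous 1 (fun x => by
        simpa using Submodule.Quotient.norm_mk_le N x) with hmkc
    have hmkc_apply : ∀ x : B, mkc x = Submodule.Quotient.mk x := fun x => rfl
    set μ : B →L[ℝ] ℝ := g.comp mkc with hμdef
    have hμ_apply : ∀ x : B, μ x = g (Submodule.Quotient.mk x) := fun x => rfl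
    have hμf : μ fhat = ‖fhat‖ := by rw [hμ_apply, hgx, hq]; norm_num
    have hμle : ‖μ‖ ≤ 1 := by
      refine ContinuousLinearMap.opNorm_le_bound μ zero_le_one fun x => ?_
      rw [hμ_apply]
      calc ‖g (Submodule.Quotient.mk x)‖ ≤ ‖g‖ * ‖(Submodule.Quotient.mk x : B ⧸ N)‖ :=
            g.le_opNorm _
        _ ≤ 1 * ‖x‖ := by
            exact mul_le_mul hg1 (Submodule.Quotient.norm_mk_le N x)
              (norm_nonneg _) zero_le_one
    have hμ1 : ‖μ‖ = 1 := by
      refine le_antisymm hμle ?_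
      have h := μ.le_opNorm fhat
      rw [Real.norm_eq_abs, hμf, abs_of_nonneg (norm_nonneg fhat)] at h
      nlinarith
    have hμN : ∀ n ∈ N, μ n = 0 := by
      intro n hn
      rw [hμ_apply, (Submodule.Quotient.mk_eq_zero N).mpr hn, map_zero]
    -- μ lies in the span of the ν j
    have hspan : (μ : B →ₗ[ℝ] ℝ) ∈
        Submodule.span ℝ (Set.range fun j => ((ν j : B →ₗ[ℝ] ℝ))) := by
      apply mem_span_of_iInf_ker_le_ker (L := fun j => ((ν j : B →ₗ[ℝ] ℝ)))
      intro x hx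
      have hxN : x ∈ N := by
        rw [hN, Submodule.mem_iInf]
        intro j
        have := Submodule.mem_iInf (fun j => LinearMap.ker ((ν j : B →ₗ[ℝ] ℝ))) |>.mp hx j
        exact this
      exact hμN x hxN
    obtain ⟨d, hd⟩ := (Submodule.mem_span_range_iff_exists_fun ℝ).mp hspan
    have hsum : (∑ j, d j • ν j) = μ := by
      ext x
      have := LinearMap.congr_fun hd x
      simpa using this
    refine ⟨fun j => ‖fhat‖ * d j, ?_⟩
    have hν₀ : (∑ j, (‖fhat‖ * d j) • ν j) = ‖fhat‖ • μ := by
      rw [← hsum, Finset.smul_sum]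
      congr 1
      ext j
      rw [smul_smul]
    have hν₀norm : ‖∑ j, (‖fhat‖ * d j) • ν j‖ = ‖fhat‖ := by
      have hsm : ‖(‖fhat‖ : ℝ) • μ‖ = ‖(‖fhat‖ : ℝ)‖ * ‖μ‖ :=
        norm_smul (β := B →L[ℝ] ℝ) _ _
      rw [hν₀, hsm, Real.norm_eq_abs, abs_of_nonneg (norm_nonneg fhat), hμ1, mul_one]
    refine ⟨‖fhat‖⁻¹ • NormedSpace.inclusionInDoubleDual ℝ B fhat, ?_, ?_⟩
    · intro μ'
      have hval : (∑ j, (‖fhat‖ * d j) • ν j) fhat = ‖fhat‖ * ‖fhat‖ := by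
        rw [hν₀, ContinuousLinearMap.smul_apply, smul_eq_mul, hμf]
      have happ : (‖fhat‖⁻¹ • NormedSpace.inclusionInDoubleDual ℝ B fhat)
          (μ' - ∑ j, (‖fhat‖ * d j) • ν j) =
          ‖fhat‖⁻¹ * (μ' fhat - ‖fhat‖ * ‖fhat‖) := by
        rw [ContinuousLinearMap.smul_apply, map_sub, smul_eq_mul,
          NormedSpace.dual_def, NormedSpace.dual_def, hval]
      rw [happ, hν₀norm]
      have hb : μ' fhat ≤ ‖μ'‖ * ‖fhat‖ := by
        have := μ'.le_opNorm fhat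
        rw [Real.norm_eq_abs] at this
        exact (le_abs_self _).trans this
      rw [inv_mul_le_iff₀ hfpos]
      nlinarith
    · rw [hν₀norm, smul_smul, mul_inv_cancel₀ (ne_of_gt hfpos), one_smul]
  · rintro ⟨hint, c, w, hsub, heq⟩
    refine ⟨hint, ?_⟩
    intro f hf
    set ν₀ : B →L[ℝ] ℝ := ∑ j, c j • ν j with hν₀
    set γ : ℝ := ‖ν₀‖ with hγ
    have hγ0 : 0 ≤ γ := norm_nonneg _
    have h1 : γ ≤ w ν₀ := by
      have := hsub 0
      simp only [zero_sub, map_neg, norm_zero] at this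
      linarith
    have h2 : w ν₀ ≤ γ := by
      have := hsub (ν₀ + ν₀)
      have hs : (ν₀ + ν₀) - ν₀ = ν₀ := by abel
      rw [hs] at this
      have hle : ‖ν₀ + ν₀‖ ≤ γ + γ := norm_add_le _ _
      linarith
    have hwν : w ν₀ = γ := le_antisymm h2 h1
    have hwle : ∀ μ : B →L[ℝ] ℝ, w μ ≤ ‖μ‖ := by
      intro μ
      have := hsub μ
      rw [map_sub, hwν] at this
      linarith
    have hw1 : ‖w‖ ≤ 1 := by
      refine ContinuousLinearMap.opNorm_le_bound w zero_le_one fun μ => ?_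
      rw [one_mul, Real.norm_eq_abs, abs_le]
      constructor
      · have := hwle (-μ)
        rw [map_neg, norm_neg] at this
        linarith
      · exact hwle μ
    have hJnorm : ‖NormedSpace.inclusionInDoubleDual ℝ B fhat‖ = ‖fhat‖ :=
      (NormedSpace.inclusionInDoubleDualLi ℝ (E := B)).norm_map fhat
    have hfle : ‖fhat‖ ≤ γ := by
      have hsm : ‖γ • w‖ = ‖γ‖ * ‖w‖ := by
        refine le_antisymm (ContinuousLinearMap.opNorm_smul_le _ _) ?_
        rcases eq_or_ne γ 0 with h0 | h0
        · rw [h0, norm_zero, zero_mul]; exact ContinuousLinearMap.opNorm_nonneg _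
        · calc ‖γ‖ * ‖w‖ = ‖γ‖ * ‖γ⁻¹ • γ • w‖ := by rw [smul_smul, inv_mul_cancel₀ h0, one_smul]
            _ ≤ ‖γ‖ * (‖γ⁻¹‖ * ‖γ • w‖) := by gcongr; exact ContinuousLinearMap.opNorm_smul_le _ _
            _ = ‖γ • w‖ := by rw [← mul_assoc, ← norm_mul, mul_inv_cancel₀ h0, norm_one, one_mul]
      rw [← hJnorm, heq, hsm, Real.norm_eq_abs, abs_of_nonneg hγ0]
      calc γ * ‖w‖ ≤ γ * 1 := mul_le_mul_of_nonneg_left hw1 hγ0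
        _ = γ := mul_one γ
    have hJν₀ : ν₀ fhat = γ * γ := by
      have h := congrArg (fun Φ : StrongDual ℝ (StrongDual ℝ B) => Φ ν₀) heq
      simp only [NormedSpace.dual_def, ContinuousLinearMap.smul_apply, smul_eq_mul,
        ContinuousLinearMap.coe_smul', Pi.smul_apply] at h
      rw [h, hwν]
    have hν₀f : ν₀ f = ν₀ fhat := by
      rw [hν₀]
      simp only [ContinuousLinearMap.sum_apply, ContinuousLinearMap.smul_apply, smul_eq_mul]
      exact Finset.sum_congr rfl fun j _ => by rw [hf j, hint j]
    have hb : ν₀ f ≤ γ * ‖f‖ := by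
      have := ν₀.le_opNorm f
      rw [Real.norm_eq_abs] at this
      exact (le_abs_self _).trans this
    rcases eq_or_lt_of_le hγ0 with hγeq | hγpos
    · have hJ0 : NormedSpace.inclusionInDoubleDual ℝ B fhat = 0 := by
        rw [heq, ← hγeq, zero_smul]
      have : ‖fhat‖ = 0 := by rw [← hJnorm, hJ0]; exact ContinuousLinearMap.opNorm_zero
      rw [this]
      exact norm_nonneg f
    · have : γ ≤ ‖f‖ := by
        have : γ * γ ≤ γ * ‖f‖ := by rw [← hJν₀, ← hν₀f]; exact hb
        exact le_of_mul_le_mul_left this hγpos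
      linarith
end

section
/- Let X be a real Banach space, B := X* its dual, and let η₁, …, η_m ∈ X be linearly independent. Let y ∈ ℝ^m. Then f̂ ∈ B is a solution of the minimum norm interpolation problem inf{‖f‖_B : f ∈ B, f(η_j) = y_j for all j} if and only if f̂(η_j) = y_j for all j and there exist c₁, …, c_m ∈ ℝ such that, with u := Σ_{j=1}^m c_j η_j ∈ X and γ := ‖u‖_X, there is w ∈ ∂‖·‖_X(u) ⊆ B with f̂ = γ · w. -/
set_option maxHeartbeats 1000000

set_option linter.unusedVariables false


/-- Explicit representer theorem in a dual space `B = X*`: `f̂` is a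
solution of the minimum norm interpolation problem with data `y` iff it interpolates
and `f̂ = γ • w` for some `w ∈ ∂‖·‖_X(u)`, where `u = Σ c_j η_j` and `γ = ‖u‖`. -/
theorem minimum_norm_interpolation_predual_iff_subdifferential
    {X : Type*} [NormedAddCommGroup X] [NormedSpace ℝ X] [CompleteSpace X]
    {m : ℕ} (η : Fin m → X) (hη : LinearIndependent ℝ η)
    (y : Fin m → ℝ) (fhat : X →L[ℝ] ℝ) :
    ((∀ j, fhat (η j) = y j) ∧
        ∀ f : X →L[ℝ] ℝ, (∀ j, f (η j) = y j) → ‖fhat‖ ≤ ‖f‖) ↔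
      ((∀ j, fhat (η j) = y j) ∧ ∃ c : Fin m → ℝ, ∃ w : X →L[ℝ] ℝ,
        (∀ v : X, w (v - ∑ j, c j • η j) ≤ ‖v‖ - ‖∑ j, c j • η j‖) ∧
        fhat = ‖∑ j, c j • η j‖ • w) := by
  
  constructor
  · rintro ⟨hint, hmin⟩
    refine ⟨hint, ?_⟩
    set M : Submodule ℝ X := Submodule.span ℝ (Set.range η) with hM
    haveI : FiniteDimensional ℝ M := FiniteDimensional.span_of_finite ℝ (Set.finite_range η)
    set g : M →L[ℝ] ℝ := fhat.comp M.subtypeL with hg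
    obtain ⟨F, hFext, hFnorm⟩ := exists_extension_norm_eq M g
    have hηM : ∀ j, η j ∈ M := fun j => Submodule.subset_span ⟨j, rfl⟩
    have hFi : ∀ j, F (η j) = y j := by
      intro j
      have := hFext ⟨η j, hηM j⟩
      simp [hg] at this
      rw [this]; exact hint j
    have hgle : ‖g‖ ≤ ‖fhat‖ := by
      refine ContinuousLinearMap.opNorm_le_bound _ (norm_nonneg _) fun x => ?_
      calc ‖g x‖ = ‖fhat x‖ := rfl
        _ ≤ ‖fhat‖ * ‖(x : X)‖ := fhat.le_opNorm _
        _ = ‖fhat‖ * ‖x‖ := rfl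
    have hNeq : ‖fhat‖ = ‖g‖ := le_antisymm (hFnorm ▸ hmin F hFi) hgle
    set N := ‖fhat‖ with hN
    by_cases hf0 : fhat = 0
    · refine ⟨0, 0, ?_, ?_⟩
      · intro v; simp
      · simp [hf0]
    -- norm attainment on the finite-dimensional subspace
    have hball : IsCompact (Metric.closedBall (0 : M) 1) := isCompact_closedBall _ _
    obtain ⟨x₀, hx₀mem, hx₀max⟩ := hball.exists_isMaxOn ⟨0, Metric.mem_closedBall_self zero_le_one⟩
      (g.continuous.continuousOn (s := Metric.closedBall (0 : M) 1))
    have hx₀n : ‖x₀‖ ≤ 1 := by simpa using hx₀mem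
    have hvalge : ∀ x : M, ‖x‖ ≤ 1 → g x ≤ g x₀ := fun x hx =>
      hx₀max (by simpa using hx)
    have hgval : g x₀ = N := by
      have h1 : g x₀ ≤ N := by
        calc g x₀ ≤ ‖g x₀‖ := le_abs_self _
          _ ≤ ‖g‖ * ‖x₀‖ := g.le_opNorm _
          _ ≤ ‖g‖ * 1 := by nlinarith [norm_nonneg g]
          _ = N := by rw [mul_one, hNeq]
      have h2 : N ≤ g x₀ := by
        rw [hNeq]
        refine ContinuousLinearMap.opNorm_le_bound _ ?_ fun x => ?_
        · have := hvalge 0 (by simp); simpa using this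
        · rcases eq_or_ne x 0 with rfl | hx
          · simp
          · have hxn : (0:ℝ) < ‖x‖ := norm_pos_iff.2 hx
            have hn1 : ‖‖x‖⁻¹ • x‖ = 1 := norm_smul_inv_norm hx
            have h₁ := hvalge (‖x‖⁻¹ • x) hn1.le
            have h₂ := hvalge (-(‖x‖⁻¹ • x)) (by rw [norm_neg]; exact hn1.le)
            rw [map_smul, smul_eq_mul] at h₁
            rw [map_neg, map_smul, smul_eq_mul] at h₂
            rw [Real.norm_eq_abs, abs_le]
            have hxx : ‖x‖ * ‖x‖⁻¹ = 1 := mul_inv_cancel₀ hxn.ne'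
            have key : ‖x‖ * (‖x‖⁻¹ * g x) = g x := by
              rw [← mul_assoc, hxx, one_mul]
            have e₁ := mul_le_mul_of_nonneg_left h₁ hxn.le
            have e₂ := mul_le_mul_of_nonneg_left h₂ hxn.le
            rw [key] at e₁
            rw [mul_neg, key] at e₂
            constructor
            · linarith
            · linarith
      linarith
    have hNpos : (0:ℝ) < N := norm_pos_iff.2 hf0
    have hx₀1 : ‖x₀‖ = 1 := by
      have : N ≤ N * ‖x₀‖ := by
        calc N = g x₀ := hgval.symm
          _ ≤ ‖g x₀‖ := le_abs_self _
          _ ≤ ‖g‖ * ‖x₀‖ := g.le_opNorm _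
          _ = N * ‖x₀‖ := by rw [hNeq]
      have : 1 ≤ ‖x₀‖ := by nlinarith
      linarith
    -- define u and w
    have humem : N • (x₀ : X) ∈ M := M.smul_mem N x₀.2
    obtain ⟨c, hc⟩ := (Submodule.mem_span_range_iff_exists_fun ℝ).mp humem
    refine ⟨c, N⁻¹ • fhat, ?_, ?_⟩
    · intro v
      rw [hc]
      have hwu : (N⁻¹ • fhat) (N • (x₀ : X)) = N := by
        have : fhat (x₀ : X) = N := hgval
        simp [smul_smul, inv_mul_cancel₀ hNpos.ne', this]
      have hun : ‖N • (x₀ : X)‖ = N := by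
        rw [norm_smul, Real.norm_eq_abs, abs_of_pos hNpos]
        have : ‖(x₀ : X)‖ = ‖x₀‖ := rfl
        rw [this, hx₀1, mul_one]
      have hwv : (N⁻¹ • fhat) v ≤ ‖v‖ := by
        have h := fhat.le_opNorm v
        have habs : fhat v ≤ N * ‖v‖ := le_trans (le_abs_self _) h
        have heq : (N⁻¹ • fhat) v = N⁻¹ * fhat v := rfl
        have hinv : N⁻¹ * N = 1 := inv_mul_cancel₀ hNpos.ne'
        rw [heq]
        have key : N⁻¹ * (N * ‖v‖) = ‖v‖ := by rw [← mul_assoc, hinv, one_mul]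
        have e := mul_le_mul_of_nonneg_left habs (inv_nonneg.2 hNpos.le)
        rw [key] at e
        linarith
      rw [map_sub, hwu, hun]
      linarith
    · rw [hc]
      have hun : ‖N • (x₀ : X)‖ = N := by
        rw [norm_smul, Real.norm_eq_abs, abs_of_pos hNpos]
        have : ‖(x₀ : X)‖ = ‖x₀‖ := rfl
        rw [this, hx₀1, mul_one]
      rw [hun, smul_smul, mul_inv_cancel₀ hNpos.ne', one_smul]
  · rintro ⟨hint, c, w, hsub, hrep⟩
    refine ⟨hint, fun f hf => ?_⟩
    set u : X := ∑ j, c j • η j with hu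
    have hwu_ge : ‖u‖ ≤ w u := by
      have := hsub 0
      simp only [zero_sub, map_neg, norm_zero] at this
      linarith
    have hwu_le : w u ≤ ‖u‖ := by
      have := hsub (2 • u)
      rw [two_smul] at this
      simp only [add_sub_cancel_right] at this
      have h2 : ‖u + u‖ ≤ ‖u‖ + ‖u‖ := norm_add_le _ _
      linarith
    have hwu : w u = ‖u‖ := le_antisymm hwu_le hwu_ge
    have hwle : ∀ v : X, w v ≤ ‖v‖ := by
      intro v
      have := hsub v
      rw [map_sub, hwu] at this
      linarith
    have hwn : ‖w‖ ≤ 1 := by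
      refine ContinuousLinearMap.opNorm_le_bound _ zero_le_one fun v => ?_
      rw [one_mul, Real.norm_eq_abs, abs_le]
      constructor
      · have := hwle (-v); rw [map_neg] at this; linarith [(norm_neg v) ▸ this]
      · exact hwle v
    have hfu : f u = ‖u‖ ^ 2 := by
      have h1 : f u = ∑ j, c j * y j := by
        rw [hu, map_sum]; congr 1; ext j; rw [map_smul, hf j]; rfl
      have h2 : fhat u = ∑ j, c j * y j := by
        rw [hu, map_sum]; congr 1; ext j; rw [map_smul, hint j]; rfl
      have h3 : fhat u = ‖u‖ ^ 2 := by
        rw [hrep]; simp only [ContinuousLinearMap.smul_apply, smul_eq_mul]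
        rw [hwu]; ring
      rw [h1, ← h2, h3]
    have hfhatn : ‖fhat‖ ≤ ‖u‖ := by
      rw [hrep]
      refine ContinuousLinearMap.opNorm_le_bound _ (norm_nonneg u) fun v => ?_
      have heq : (‖u‖ • w) v = ‖u‖ * w v := rfl
      rw [heq, Real.norm_eq_abs, abs_mul, abs_of_nonneg (norm_nonneg u)]
      have h1 : |w v| ≤ ‖v‖ := by
        have := w.le_opNorm v
        rw [Real.norm_eq_abs] at this
        nlinarith [norm_nonneg v, abs_nonneg (w v)]
      nlinarith [norm_nonneg u, norm_nonneg v, abs_nonneg (w v)]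
    rcases eq_or_ne u 0 with hu0 | hu0
    · have : fhat = 0 := by rw [hrep, hu0]; simp
      rw [this]; simp [norm_nonneg]
    · have hupos : (0:ℝ) < ‖u‖ := norm_pos_iff.2 hu0
      have : ‖u‖ ^ 2 ≤ ‖f‖ * ‖u‖ := by
        rw [← hfu]
        calc f u ≤ ‖f u‖ := le_abs_self _
          _ ≤ ‖f‖ * ‖u‖ := f.le_opNorm _
      nlinarith
end

section
/- Let 1 < p < ∞ and q with 1/p + 1/q = 1. Let u₁, …, u_m ∈ ℓ_q(ℕ) be linearly independent and let y ∈ ℝ^m with y ≠ 0. Then the minimum norm interpolation problem inf{‖x‖_p : x ∈ ℓ_p(ℕ), ⟨u_j, x⟩ = y_j for all j} has a unique solution x̂ = (x̂_i)_{i∈ℕ}, and there exist c₁, …, c_m ∈ ℝ such that, with u := Σ_{j=1}^m c_j u_j (necessarily u ≠ 0), x̂_i = u_i |u_i|^{q−2} / ‖u‖_q^{q−2} for every i ∈ ℕ, with the convention that the i-th term is 0 when u_i = 0. -/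
set_option maxHeartbeats 1000000

open Real Filter Topology

section Aux

variable {q : ℝ}

lemma abs_phi (hq : 1 < q) (a : ℝ) : |a * |a| ^ (q - 2)| = |a| ^ (q - 1) := by
  rcases eq_or_ne a 0 with rfl | ha
  · simp [Real.zero_rpow (by linarith : q - 1 ≠ 0)]
  · have h : (0:ℝ) < |a| := abs_pos.2 ha
    rw [abs_mul, abs_rpow_of_nonneg (abs_nonneg a), abs_abs]
    rw [show q - 1 = 1 + (q - 2) by ring, Real.rpow_add h, Real.rpow_one]

lemma phi_mul_self (hq : 1 < q) (a : ℝ) : a * |a| ^ (q - 2) * a = |a| ^ q := by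
  rcases eq_or_ne a 0 with rfl | ha
  · simp [Real.zero_rpow (by linarith : q ≠ 0)]
  · have h : (0:ℝ) < |a| := abs_pos.2 ha
    have h2 : a * a = |a| ^ (2:ℝ) := by
      rw [show ((2:ℝ)) = ((2:ℕ):ℝ) by norm_num, Real.rpow_natCast, sq_abs, sq]
    calc a * |a| ^ (q - 2) * a = |a| ^ (q-2) * (a * a) := by ring
    _ = |a| ^ (q-2) * |a| ^ (2:ℝ) := by rw [h2]
    _ = |a| ^ q := by rw [← Real.rpow_add h]; ring_nf

lemma rpow_abs_phi (hq : 1 < q) {p : ℝ} (hp : (q-1) * p = q) (a : ℝ) :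
    |a * |a| ^ (q - 2)| ^ p = |a| ^ q := by
  rw [abs_phi hq, ← Real.rpow_mul (abs_nonneg a), hp]

-- Young equality case
lemma young_eq {p q a b : ℝ} (hpq : Real.HolderConjugate p q) (ha : 0 ≤ a) (hb : 0 ≤ b)
    (h : a * b = a ^ p / p + b ^ q / q) : b ^ q = a ^ p := by
  rcases eq_or_lt_of_le ha with rfl | ha'
  · rw [Real.zero_rpow hpq.ne_zero, zero_mul, zero_div, zero_add] at h
    have hbq : b ^ q = 0 := by
      rcases div_eq_zero_iff.1 h.symm with h' | h'
      · exact h'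
      · exact absurd h' hpq.symm.ne_zero
    rw [hbq, Real.zero_rpow hpq.ne_zero]
  rcases eq_or_lt_of_le hb with rfl | hb'
  · rw [Real.zero_rpow hpq.symm.ne_zero, mul_zero, zero_div, add_zero] at h
    rw [Real.zero_rpow hpq.symm.ne_zero]
    rcases div_eq_zero_iff.1 h.symm with h' | h'
    · exact h'.symm
    · exact absurd h' hpq.ne_zero
  -- now a, b > 0
  set b0 := a ^ (p - 1) with hb0
  have hb0pos : 0 < b0 := Real.rpow_pos_of_pos ha' _
  have hb0q : b0 ^ q = a ^ p := by
    rw [hb0, ← Real.rpow_mul ha, hpq.sub_one_mul_conj]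
  have hexp : (p - 1) * (q - 1) = 1 := by nlinarith [hpq.mul_eq_add]
  have hb0q1 : b0 ^ (q - 1) = a := by
    rw [hb0, ← Real.rpow_mul ha, hexp, Real.rpow_one]
  set S : ℝ → ℝ := fun t => a ^ p / p + t ^ q / q - a * t with hS
  have hcont : Continuous S := by
    have h1 : Continuous fun t : ℝ => t ^ q :=
      continuous_iff_continuousAt.2 fun x =>
        Real.continuousAt_rpow_const x q (Or.inr (le_of_lt hpq.symm.pos))
    fun_prop
  have hderiv : ∀ t : ℝ, 0 < t → HasDerivAt S (t ^ (q - 1) - a) t := by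
    intro t ht
    have h1 : HasDerivAt (fun t : ℝ => t ^ q) (q * t ^ (q - 1)) t :=
      Real.hasDerivAt_rpow_const (Or.inl ht.ne')
    have h2 := ((h1.div_const q).const_add (a ^ p / p)).sub
      ((hasDerivAt_id t).const_mul a)
    convert h2 using 1
    · rfl
    · rfl
    · rfl
    · field_simp [hpq.symm.ne_zero]
  have hSb : S b = 0 := by rw [hS]; simp only; linarith [h]
  have hSb0 : 0 ≤ S b0 := by
    have := Real.young_inequality_of_nonneg ha (le_of_lt hb0pos) hpq
    simp only [hS]; linarith
  suffices hbb0 : b = b0 by rw [hbb0, hb0q]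
  by_contra hne
  rcases lt_or_gt_of_ne hne with hlt | hlt
  · -- b < b0 : S strictly decreasing on [b, b0]
    have hanti : StrictAntiOn S (Set.Icc b b0) := by
      refine strictAntiOn_of_deriv_neg (convex_Icc _ _) hcont.continuousOn ?_
      intro t ht
      rw [interior_Icc] at ht
      have ht0 : 0 < t := lt_trans hb' ht.1
      rw [(hderiv t ht0).deriv]
      have : t ^ (q - 1) < b0 ^ (q - 1) :=
        Real.rpow_lt_rpow (le_of_lt ht0) ht.2 hpq.symm.sub_one_pos
      rw [hb0q1] at this
      linarith
    have := hanti (Set.left_mem_Icc.2 (le_of_lt hlt)) (Set.right_mem_Icc.2 (le_of_lt hlt)) hlt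
    linarith
  · -- b0 < b : S strictly increasing on [b0, b]
    have hmono : StrictMonoOn S (Set.Icc b0 b) := by
      refine strictMonoOn_of_deriv_pos (convex_Icc _ _) hcont.continuousOn ?_
      intro t ht
      rw [interior_Icc] at ht
      have ht0 : 0 < t := lt_trans hb0pos ht.1
      rw [(hderiv t ht0).deriv]
      have : b0 ^ (q - 1) < t ^ (q - 1) :=
        Real.rpow_lt_rpow (le_of_lt hb0pos) ht.1 hpq.symm.sub_one_pos
      rw [hb0q1] at this
      linarith
    have := hmono (Set.left_mem_Icc.2 (le_of_lt hlt)) (Set.right_mem_Icc.2 (le_of_lt hlt)) hlt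
    linarith


lemma slope_bound_aux (hq : 1 < q) (a b : ℝ) {t : ℝ} (ht1 : |t| ≤ 1) :
    |(|a + t * b| ^ q - |a| ^ q)| ≤ q * (|a| + |b|) ^ (q - 1) * |b| * |t| := by
  have key := Convex.norm_image_sub_le_of_norm_hasDerivWithin_le
    (f := fun s : ℝ => |a + s * b| ^ q)
    (f' := fun s : ℝ => q * |a + s * b| ^ (q - 2) * (a + s * b) * b)
    (C := q * (|a| + |b|) ^ (q - 1) * |b|) (s := Set.Icc (-1 : ℝ) 1)
    (x := (0:ℝ)) (y := t)
    (fun s hs => by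
      have h1 : HasDerivAt (fun t : ℝ => a + t * b) b s :=
        (hasDerivAt_mul_const b).const_add a
      have h2 := (hasDerivAt_abs_rpow (a + s * b) hq).comp s h1
      exact (h2.congr_deriv (by ring)).hasDerivWithinAt)
    (fun s hs => by
      have habs : |a + s * b| ≤ |a| + |b| := by
        calc |a + s * b| ≤ |a| + |s * b| := abs_add_le _ _
        _ ≤ |a| + |b| := by
          rw [abs_mul]
          have : |s| ≤ 1 := abs_le.2 ⟨hs.1, hs.2⟩
          nlinarith [abs_nonneg b]
      have h3 : |q * |a + s * b| ^ (q - 2) * (a + s * b) * b|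
          = q * |a + s * b| ^ (q - 1) * |b| := by
        have e : q * |a + s * b| ^ (q - 2) * (a + s * b) * b
            = ((a + s * b) * |a + s * b| ^ (q - 2)) * b * q := by ring
        rw [e, abs_mul, abs_mul, abs_phi hq, abs_of_pos (by linarith : (0:ℝ) < q)]
        ring
      have h4 : |a + s * b| ^ (q - 1) ≤ (|a| + |b|) ^ (q - 1) :=
        Real.rpow_le_rpow (abs_nonneg _) habs (by linarith)
      rw [Real.norm_eq_abs, h3]
      exact mul_le_mul_of_nonneg_right
        (mul_le_mul_of_nonneg_left h4 (by linarith)) (abs_nonneg b))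
    (convex_Icc _ _)
    (Set.mem_Icc.2 ⟨by norm_num, by norm_num⟩)
    (Set.mem_Icc.2 ⟨by linarith [(abs_le.1 ht1).1], by linarith [(abs_le.1 ht1).2]⟩)
  simp only [Real.norm_eq_abs, zero_mul, add_zero, sub_zero] at key
  convert key using 2 <;> ring

lemma tendsto_slope_tsum {p : ℝ} (hpq : Real.HolderConjugate p q) {w g : ℕ → ℝ}
    (hw : Summable fun i => |w i| ^ q) (hg : Summable fun i => |g i| ^ q) :
    Tendsto (fun t : ℝ => ((∑' i, |w i + t * g i| ^ q) - ∑' i, |w i| ^ q) / t)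
      (𝓝[≠] (0:ℝ)) (𝓝 (∑' i, q * |w i| ^ (q - 2) * w i * g i)) := by
  have hq : 1 < q := hpq.symm.lt
  have hq0 : (0:ℝ) < q := by linarith
  have hp0 : (0:ℝ) < p := hpq.pos
  set Q := ENNReal.ofReal q with hQdef
  set P := ENNReal.ofReal p with hPdef
  have hQ : Q.toReal = q := ENNReal.toReal_ofReal (le_of_lt hq0)
  have hP : P.toReal = p := ENNReal.toReal_ofReal (le_of_lt hp0)
  have hPQ : P.toReal.HolderConjugate Q.toReal := by rw [hP, hQ]; exact hpq
  -- membership facts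
  have memW : Memℓp w Q := memℓp_gen (by simpa [Real.norm_eq_abs, hQ] using hw)
  have memG : Memℓp g Q := memℓp_gen (by simpa [Real.norm_eq_abs, hQ] using hg)
  have memWa : Memℓp (fun i => |w i|) Q :=
    memℓp_gen (by simpa [Real.norm_eq_abs, hQ] using hw)
  have memGa : Memℓp (fun i => |g i|) Q :=
    memℓp_gen (by simpa [Real.norm_eq_abs, hQ] using hg)
  have memS : Memℓp (fun i => |w i| + |g i|) Q := memWa.add memGa
  have hsumS : Summable fun i => (|w i| + |g i|) ^ q := by
    have h0 := memS.summable (by rw [hQ]; exact hq0)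
    simp only [Real.norm_eq_abs, hQ] at h0
    exact h0.congr fun i => by
      rw [abs_of_nonneg (by positivity : (0:ℝ) ≤ |w i| + |g i|)]
  have memH : Memℓp (fun i => (|w i| + |g i|) ^ (q - 1)) P := by
    apply memℓp_gen
    rw [hP]
    have : ∀ i : ℕ, ‖(|w i| + |g i|) ^ (q - 1)‖ ^ p = (|w i| + |g i|) ^ q := by
      intro i
      rw [Real.norm_eq_abs, abs_of_nonneg (Real.rpow_nonneg (by positivity) _),
        ← Real.rpow_mul (by positivity), hpq.symm.sub_one_mul_conj]
    exact hsumS.congr fun i => (this i).symm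
  have hbd : Summable fun i => (|w i| + |g i|) ^ (q - 1) * |g i| := by
    have := lp.summable_mul hPQ (⟨_, memH⟩ : lp (fun _ : ℕ => ℝ) P)
      (⟨_, memGa⟩ : lp (fun _ : ℕ => ℝ) Q)
    simp only [Real.norm_eq_abs, abs_abs] at this
    exact this.congr fun i => by
      rw [abs_of_nonneg (Real.rpow_nonneg (by positivity : (0:ℝ) ≤ |w i| + |g i|) _)]
  have ht1 : ∀ᶠ t : ℝ in 𝓝[≠] (0:ℝ), |t| ≤ 1 := by
    have h : ∀ᶠ t : ℝ in 𝓝 (0:ℝ), |t| ≤ 1 := by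
      filter_upwards [Metric.closedBall_mem_nhds (0:ℝ) one_pos] with t ht
      simpa [Real.dist_eq] using ht
    exact h.filter_mono nhdsWithin_le_nhds
  -- dominated convergence
  have main := tendsto_tsum_of_dominated_convergence
    (𝓕 := 𝓝[≠] (0:ℝ))
    (f := fun (t : ℝ) (i : ℕ) => (|w i + t * g i| ^ q - |w i| ^ q) / t)
    (g := fun i => q * |w i| ^ (q - 2) * w i * g i)
    (bound := fun i => q * ((|w i| + |g i|) ^ (q - 1) * |g i|))
    (hbd.mul_left q)
    (by
      intro i
      have h1 : HasDerivAt (fun t : ℝ => w i + t * g i) (g i) 0 :=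
        (hasDerivAt_mul_const _).const_add _
      have h2 := (hasDerivAt_abs_rpow (w i + 0 * g i) hq).comp 0 h1
      simp only [zero_mul, add_zero] at h2
      have hD : HasDerivAt (fun t : ℝ => |w i + t * g i| ^ q)
          (q * |w i| ^ (q - 2) * w i * g i) 0 := h2.congr_deriv (by ring)
      have := hasDerivAt_iff_tendsto_slope.1 hD
      refine this.congr' ?_
      filter_upwards [self_mem_nhdsWithin] with t ht
      simp [slope_def_field, sub_zero])
    (by
      filter_upwards [ht1, self_mem_nhdsWithin] with t h1 ht
      intro i
      have key := slope_bound_aux hq (w i) (g i) h1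
      rw [Real.norm_eq_abs, abs_div]
      rw [div_le_iff₀ (abs_pos.2 ht)]
      calc |(|w i + t * g i| ^ q - |w i| ^ q)|
          ≤ q * (|w i| + |g i|) ^ (q - 1) * |g i| * |t| := key
      _ = q * ((|w i| + |g i|) ^ (q - 1) * |g i|) * |t| := by ring)
  refine main.congr' ?_
  filter_upwards [self_mem_nhdsWithin] with t ht
  have hB : Summable fun i => |w i| ^ q := hw
  have hA : Summable fun i => |w i + t * g i| ^ q := by
    have mem := memW.add (memG.const_smul t)
    have := mem.summable (by rw [hQ]; exact hq0)
    simpa [Real.norm_eq_abs, hQ, Pi.add_apply, Pi.smul_apply, smul_eq_mul] using this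
  rw [eq_comm, ← Summable.tsum_sub hA hB, ← tsum_div_const]

lemma exists_dual_min {p q : ℝ} (hpq : Real.HolderConjugate p q) {m : ℕ}
    (u : Fin m → lp (fun _ : ℕ => ℝ) (ENNReal.ofReal q))
    (hu : LinearIndependent ℝ u) (y : Fin m → ℝ) :
    ∃ c : Fin m → ℝ, ∀ j, ∑' i, ((∑ k, c k • u k : lp (fun _ : ℕ => ℝ) (ENNReal.ofReal q)) i *
      |(∑ k, c k • u k : lp (fun _ : ℕ => ℝ) (ENNReal.ofReal q)) i| ^ (q - 2) * u j i) = y j := by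
  have hq : 1 < q := hpq.symm.lt
  have hq0 : (0:ℝ) < q := by linarith
  have hQ : (ENNReal.ofReal q).toReal = q := ENNReal.toReal_ofReal (le_of_lt hq0)
  haveI : Fact (1 ≤ ENNReal.ofReal q) := ⟨by
    rw [← ENNReal.ofReal_one]
    exact ENNReal.ofReal_le_ofReal (le_of_lt hq)⟩
  -- the linear map
  set T : (Fin m → ℝ) → lp (fun _ : ℕ => ℝ) (ENNReal.ofReal q) :=
    fun c => ∑ k, c k • u k with hTdef
  have hTadd : ∀ a b, T (a + b) = T a + T b := by
    intro a b
    simp only [hTdef, Pi.add_apply, add_smul, Finset.sum_add_distrib]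
  have hTsmul : ∀ (r : ℝ) a, T (r • a) = r • T a := by
    intro r a
    simp only [hTdef, Pi.smul_apply, smul_eq_mul, mul_smul, ← Finset.smul_sum]
  have hTcont : Continuous T := by
    apply continuous_finset_sum
    intro j _
    exact (continuous_apply j).smul continuous_const
  -- injectivity and lower bound
  set TL : (Fin m → ℝ) →ₗ[ℝ] lp (fun _ : ℕ => ℝ) (ENNReal.ofReal q) :=
    { toFun := T, map_add' := hTadd, map_smul' := hTsmul } with hTLdef
  have hTinj : Function.Injective TL := by
    intro a b hab
    have h0 : TL (a - b) = 0 := by rw [map_sub, hab, sub_self]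
    have h0' : ∑ k, (a - b) k • u k = 0 := h0
    have := Fintype.linearIndependent_iff.1 hu (a - b) h0'
    funext k
    have := this k
    simpa [sub_eq_zero] using this
  obtain ⟨C0, hC0pos, hC0⟩ : ∃ C0 : ℝ, 0 < C0 ∧ ∀ c : Fin m → ℝ, ‖c‖ ≤ C0 * ‖T c‖ := by
    let e : (Fin m → ℝ) ≃ₗ[ℝ] LinearMap.range TL := LinearEquiv.ofInjective TL hTinj
    let e' := e.toContinuousLinearEquiv
    refine ⟨max ‖(e'.symm : LinearMap.range TL →L[ℝ] (Fin m → ℝ))‖ 1,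
      lt_of_lt_of_le one_pos (le_max_right _ _), fun c => ?_⟩
    have h1 : c = e'.symm (e' c) := (e'.symm_apply_apply c).symm
    have h2 : ‖e'.symm (e' c)‖ ≤
        ‖(e'.symm : LinearMap.range TL →L[ℝ] (Fin m → ℝ))‖ * ‖e' c‖ :=
      (e'.symm : LinearMap.range TL →L[ℝ] (Fin m → ℝ)).le_opNorm _
    have h3 : ‖e' c‖ = ‖T c‖ := rfl
    calc ‖c‖ = ‖e'.symm (e' c)‖ := by rw [← h1]
    _ ≤ ‖(e'.symm : LinearMap.range TL →L[ℝ] (Fin m → ℝ))‖ * ‖e' c‖ := h2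
    _ ≤ max ‖(e'.symm : LinearMap.range TL →L[ℝ] (Fin m → ℝ))‖ 1 * ‖T c‖ := by
        rw [h3]
        exact mul_le_mul_of_nonneg_right (le_max_left _ _) (norm_nonneg _)
  -- the objective function
  set F : (Fin m → ℝ) → ℝ := fun c => ‖T c‖ ^ q / q - ∑ j, c j * y j with hFdef
  have hFcont : Continuous F := by
    have h1 : Continuous fun x : ℝ => x ^ q :=
      continuous_iff_continuousAt.2 fun x =>
        Real.continuousAt_rpow_const x q (Or.inr (le_of_lt hq0))
    exact ((h1.comp hTcont.norm).div_const q).sub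
      (continuous_finset_sum _ fun j _ => (continuous_apply j).mul continuous_const)
  set B := ∑ j, |y j| with hBdef
  have hεpos : (0:ℝ) < C0⁻¹ := inv_pos.2 hC0pos
  have hlow : ∀ c : Fin m → ℝ, C0⁻¹ ^ q * ‖c‖ ^ q / q - B * ‖c‖ ≤ F c := by
    intro c
    have h1 : C0⁻¹ * ‖c‖ ≤ ‖T c‖ := by
      rw [← div_eq_inv_mul, div_le_iff₀ hC0pos]
      calc ‖c‖ ≤ C0 * ‖T c‖ := hC0 c
      _ = ‖T c‖ * C0 := mul_comm _ _
    have h2 : C0⁻¹ ^ q * ‖c‖ ^ q ≤ ‖T c‖ ^ q := by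
      rw [← Real.mul_rpow (le_of_lt hεpos) (norm_nonneg _)]
      exact Real.rpow_le_rpow (by positivity) h1 (le_of_lt hq0)
    have h3 : |∑ j, c j * y j| ≤ B * ‖c‖ := by
      calc |∑ j, c j * y j| ≤ ∑ j, |c j * y j| := Finset.abs_sum_le_sum_abs _ _
      _ ≤ ∑ j, |y j| * ‖c‖ := by
          apply Finset.sum_le_sum; intro j _
          have hc : |c j| ≤ ‖c‖ := by
            simpa [Real.norm_eq_abs] using norm_le_pi_norm c j
          calc |c j * y j| = |c j| * |y j| := abs_mul _ _
          _ ≤ ‖c‖ * |y j| := mul_le_mul_of_nonneg_right hc (abs_nonneg _)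
          _ = |y j| * ‖c‖ := mul_comm _ _
      _ = B * ‖c‖ := by rw [hBdef, Finset.sum_mul]
    have h4 := abs_le.1 h3
    simp only [hFdef]
    have h5 : C0⁻¹ ^ q * ‖c‖ ^ q / q ≤ ‖T c‖ ^ q / q :=
      div_le_div_of_nonneg_right h2 (le_of_lt hq0)
    linarith [h4.2, h5]
  have hgtend : Tendsto (fun r : ℝ => C0⁻¹ ^ q * r ^ q / q - B * r) atTop atTop := by
    have h1 : Tendsto (fun r : ℝ => r ^ (q - 1)) atTop atTop :=
      tendsto_rpow_atTop (by linarith : (0:ℝ) < q - 1)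
    have h2 : Tendsto (fun r : ℝ => C0⁻¹ ^ q / q * r ^ (q - 1) + -B) atTop atTop :=
      Filter.tendsto_atTop_add_const_right _ _ (h1.const_mul_atTop (by positivity))
    have h3 := Filter.tendsto_id.atTop_mul_atTop₀ h2
    refine h3.congr' ?_
    filter_upwards [eventually_gt_atTop (0:ℝ)] with r hr
    have hrq : r ^ q = r * r ^ (q - 1) := by
      rw [show q = 1 + (q - 1) by ring, Real.rpow_add hr, Real.rpow_one]
      ring_nf
    simp only [id_eq]
    rw [hrq]
    ring
  have hFcoer : Tendsto F (cocompact _) atTop :=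
    Filter.tendsto_atTop_mono hlow (hgtend.comp tendsto_norm_cocompact_atTop)
  obtain ⟨chat, hchat⟩ := hFcont.exists_forall_le hFcoer
  refine ⟨chat, fun j => ?_⟩
  set W := T chat with hWdef
  have hWsum : Summable fun i => |W i| ^ q := by
    have := (lp.memℓp W).summable (by rw [hQ]; exact hq0)
    simpa [Real.norm_eq_abs, hQ] using this
  have hGsum : Summable fun i => |u j i| ^ q := by
    have := (lp.memℓp (u j)).summable (by rw [hQ]; exact hq0)
    simpa [Real.norm_eq_abs, hQ] using this
  have hslope := tendsto_slope_tsum hpq hWsum hGsum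
  set D := ∑' i, q * |W i| ^ (q - 2) * W i * u j i with hDdef
  have hpert : ∀ t : ℝ, T (chat + t • (Pi.single j (1:ℝ) : Fin m → ℝ)) = W + t • u j := by
    intro t
    rw [hWdef]
    simp only [hTdef]
    have he : ∀ k : Fin m, k ∈ Finset.univ →
        (chat + t • (Pi.single j (1:ℝ) : Fin m → ℝ)) k • u k
          = chat k • u k + (t * (Pi.single j (1:ℝ) : Fin m → ℝ) k) • u k := by
      intro k _
      simp [add_smul, Pi.smul_apply, smul_eq_mul]
    rw [Finset.sum_congr rfl he, Finset.sum_add_distrib]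
    congr 1
    rw [Finset.sum_eq_single j]
    · simp
    · intro k _ hk
      simp [Pi.single_eq_of_ne hk]
    · intro h
      exact absurd (Finset.mem_univ j) h
  have hnorm_tsum : ∀ V : lp (fun _ : ℕ => ℝ) (ENNReal.ofReal q),
      ‖V‖ ^ q = ∑' i, |V i| ^ q := by
    intro V
    have := lp.norm_rpow_eq_tsum (p := ENNReal.ofReal q) (by rw [hQ]; exact hq0) V
    simpa [Real.norm_eq_abs, hQ] using this
  have hkey : ∀ t : ℝ, 0 ≤ (‖W + t • u j‖ ^ q - ‖W‖ ^ q) / q - t * y j := by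
    intro t
    have h1 := hchat (chat + t • (Pi.single j (1:ℝ) : Fin m → ℝ))
    simp only [hFdef] at h1
    rw [hpert t] at h1
    have h2 : ∑ k, (chat + t • (Pi.single j (1:ℝ) : Fin m → ℝ)) k * y k
        = (∑ k, chat k * y k) + t * y j := by
      have he : ∀ k : Fin m, k ∈ Finset.univ →
          (chat + t • (Pi.single j (1:ℝ) : Fin m → ℝ)) k * y k
            = chat k * y k + (t * (Pi.single j (1:ℝ) : Fin m → ℝ) k) * y k := by
        intro k _
        simp [Pi.add_apply, Pi.smul_apply, smul_eq_mul]
        ring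
      rw [Finset.sum_congr rfl he, Finset.sum_add_distrib]
      congr 1
      rw [Finset.sum_eq_single j]
      · simp
      · intro k _ hk
        simp [Pi.single_eq_of_ne hk]
      · intro h
        exact absurd (Finset.mem_univ j) h
    rw [h2] at h1
    have h3 : ‖T chat‖ = ‖W‖ := by rw [hWdef]
    rw [h3] at h1
    have := sub_nonneg.2 h1
    calc (0:ℝ) ≤ (‖W + t • u j‖ ^ q / q - ((∑ k, chat k * y k) + t * y j))
        - (‖W‖ ^ q / q - ∑ k, chat k * y k) := this
    _ = (‖W + t • u j‖ ^ q - ‖W‖ ^ q) / q - t * y j := by ring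
  have hΦ : ∀ t : ℝ, ((∑' i, |W i + t * u j i| ^ q) - ∑' i, |W i| ^ q)
      = ‖W + t • u j‖ ^ q - ‖W‖ ^ q := by
    intro t
    have hi : ∀ i : ℕ, (W + t • u j) i = W i + t * u j i := by
      intro i
      simp [lp.coeFn_add, lp.coeFn_smul, Pi.smul_apply, smul_eq_mul]
      rfl
    have h1 : ‖W + t • u j‖ ^ q = ∑' i, |W i + t * u j i| ^ q := by
      rw [hnorm_tsum]
      exact tsum_congr fun i => by rw [hi i]
    rw [h1, hnorm_tsum]
  have hge : q * y j ≤ D := by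
    have hmono : 𝓝[>] (0:ℝ) ≤ 𝓝[≠] (0:ℝ) :=
      nhdsWithin_mono 0 fun t ht => ne_of_gt ht
    refine ge_of_tendsto (hslope.mono_left hmono) ?_
    filter_upwards [self_mem_nhdsWithin] with t ht
    have h0 := hkey t
    rw [le_div_iff₀ ht, hΦ t]
    have h1 : t * y j * q ≤ ‖W + t • u j‖ ^ q - ‖W‖ ^ q :=
      (le_div_iff₀ hq0).1 (by linarith)
    linarith [h1]
  have hle : D ≤ q * y j := by
    have hmono : 𝓝[<] (0:ℝ) ≤ 𝓝[≠] (0:ℝ) :=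
      nhdsWithin_mono 0 fun t ht => ne_of_lt ht
    refine le_of_tendsto (hslope.mono_left hmono) ?_
    filter_upwards [self_mem_nhdsWithin] with t ht
    have h0 := hkey t
    rw [div_le_iff_of_neg ht, hΦ t]
    have h1 : t * y j * q ≤ ‖W + t • u j‖ ^ q - ‖W‖ ^ q :=
      (le_div_iff₀ hq0).1 (by linarith)
    linarith [h1]
  have hD : D = q * y j := le_antisymm hle hge
  have hD2 : D = q * ∑' i, (W i * |W i| ^ (q - 2) * u j i) := by
    rw [hDdef, ← tsum_mul_left]
    apply tsum_congr
    intro i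
    ring
  rw [hD2] at hD
  exact mul_left_cancel₀ (ne_of_gt hq0) hD

/-- Explicit solution of minimum norm interpolation in `ℓ_p(ℕ)`,
`1 < p < ∞`: the problem has a unique solution `x̂` and there are coefficients `c_j`
such that, with `u := Σ c_j u_j`, `x̂_i = u_i |u_i|^{q-2} / ‖u‖_q^{q-2}`. -/
theorem minimum_norm_interpolation_lp
    (p q : ℝ) (hp : 1 < p) (hpq : 1 / p + 1 / q = 1)
    {m : ℕ} (u : Fin m → lp (fun _ : ℕ => ℝ) (ENNReal.ofReal q))
    (hu : LinearIndependent ℝ u) (y : Fin m → ℝ) (hy : y ≠ 0) :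
    ∃ xhat : lp (fun _ : ℕ => ℝ) (ENNReal.ofReal p),
      ((∀ j, ∑' i, u j i * xhat i = y j) ∧
        ∀ x : lp (fun _ : ℕ => ℝ) (ENNReal.ofReal p),
          (∀ j, ∑' i, u j i * x i = y j) → ‖xhat‖ ≤ ‖x‖) ∧
      (∀ x : lp (fun _ : ℕ => ℝ) (ENNReal.ofReal p),
        ((∀ j, ∑' i, u j i * x i = y j) ∧
          ∀ x' : lp (fun _ : ℕ => ℝ) (ENNReal.ofReal p),
            (∀ j, ∑' i, u j i * x' i = y j) → ‖x‖ ≤ ‖x'‖) → x = xhat) ∧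
      ∃ c : Fin m → ℝ, ∀ i : ℕ,
        xhat i = (∑ j, c j • u j) i * |(∑ j, c j • u j) i| ^ (q - 2) /
          ‖∑ j, c j • u j‖ ^ (q - 2) := by
  have hp0 : (0:ℝ) < p := by linarith
  have hpq' : Real.HolderConjugate p q := Real.holderConjugate_iff.mpr ⟨hp, by
    rw [← one_div, ← one_div]; exact hpq⟩
  have hq : 1 < q := hpq'.symm.lt
  have hq0 : (0:ℝ) < q := by linarith
  have hQ : (ENNReal.ofReal q).toReal = q := ENNReal.toReal_ofReal (le_of_lt hq0)
  have hP : (ENNReal.ofReal p).toReal = p := ENNReal.toReal_ofReal (le_of_lt hp0)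
  have hPQ : (ENNReal.ofReal p).toReal.HolderConjugate (ENNReal.ofReal q).toReal := by
    rw [hP, hQ]; exact hpq'
  haveI : Fact (1 ≤ ENNReal.ofReal q) := ⟨by
    rw [← ENNReal.ofReal_one]
    exact ENNReal.ofReal_le_ofReal (le_of_lt hq)⟩
  haveI : Fact (1 ≤ ENNReal.ofReal p) := ⟨by
    rw [← ENNReal.ofReal_one]
    exact ENNReal.ofReal_le_ofReal (le_of_lt hp)⟩
  have hq1p : (q - 1) * p = q := hpq'.symm.sub_one_mul_conj
  -- norm formulas
  have hnq : ∀ V : lp (fun _ : ℕ => ℝ) (ENNReal.ofReal q),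
      ‖V‖ ^ q = ∑' i, |V i| ^ q := by
    intro V
    have := lp.norm_rpow_eq_tsum (p := ENNReal.ofReal q) (by rw [hQ]; exact hq0) V
    simpa [Real.norm_eq_abs, hQ] using this
  have hnp : ∀ V : lp (fun _ : ℕ => ℝ) (ENNReal.ofReal p),
      ‖V‖ ^ p = ∑' i, |V i| ^ p := by
    intro V
    have := lp.norm_rpow_eq_tsum (p := ENNReal.ofReal p) (by rw [hP]; exact hp0) V
    simpa [Real.norm_eq_abs, hP] using this
  -- dual minimizer
  obtain ⟨c0, hc0⟩ := exists_dual_min hpq' u hu y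
  set W : lp (fun _ : ℕ => ℝ) (ENNReal.ofReal q) := ∑ k, c0 k • u k with hWdef
  have hWsum : Summable fun i => |W i| ^ q := by
    have := (lp.memℓp W).summable (by rw [hQ]; exact hq0)
    simpa [Real.norm_eq_abs, hQ] using this
  have hWne : W ≠ 0 := by
    intro h0
    apply hy
    funext j
    have h1 := hc0 j
    rw [h0] at h1
    simpa using h1.symm
  have hWpos : 0 < ‖W‖ := norm_pos_iff.2 hWne
  -- xhat
  have hxhat_mem : Memℓp (fun i => W i * |W i| ^ (q - 2)) (ENNReal.ofReal p) := by
    apply memℓp_gen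
    rw [hP]
    exact hWsum.congr fun i => by
      rw [← rpow_abs_phi hq hq1p (W i), Real.norm_eq_abs]
  set xhat : lp (fun _ : ℕ => ℝ) (ENNReal.ofReal p) := ⟨_, hxhat_mem⟩ with hxhatdef
  have hxhat_apply : ∀ i, xhat i = W i * |W i| ^ (q - 2) := fun i => rfl
  have hxnormp : ‖xhat‖ ^ p = ‖W‖ ^ q := by
    rw [hnp xhat, hnq W]
    exact tsum_congr fun i => by
      rw [hxhat_apply i, ← rpow_abs_phi hq hq1p (W i)]
  have hxnorm : ‖xhat‖ = ‖W‖ ^ (q - 1) := by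
    have h1 : (‖xhat‖ ^ p) ^ p⁻¹ = (‖W‖ ^ q) ^ p⁻¹ := by rw [hxnormp]
    rw [← Real.rpow_mul (norm_nonneg xhat), ← Real.rpow_mul (norm_nonneg W),
      mul_inv_cancel₀ (ne_of_gt hp0), Real.rpow_one] at h1
    rw [h1]
    congr 1
    rw [← hpq'.symm.div_conj_eq_sub_one]
    rw [div_eq_mul_inv]
  -- feasibility
  have hfeas : ∀ j, ∑' i, u j i * xhat i = y j := by
    intro j
    rw [← hc0 j]
    exact tsum_congr fun i => by rw [hxhat_apply i]; ring
  -- summability of pairings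
  have hsummul : ∀ (x : lp (fun _ : ℕ => ℝ) (ENNReal.ofReal p))
      (V : lp (fun _ : ℕ => ℝ) (ENNReal.ofReal q)),
      Summable fun i => V i * x i := by
    intro x V
    apply Summable.of_norm
    exact (lp.summable_mul hPQ x V).congr fun i => by
      rw [norm_mul]; ring
  -- pairing identity
  have hpair : ∀ x : lp (fun _ : ℕ => ℝ) (ENNReal.ofReal p),
      (∀ j, ∑' i, u j i * x i = y j) → ∑' i, W i * x i = ∑ j, c0 j * y j := by
    intro x hx
    have hWi : ∀ i, W i = ∑ j, c0 j * u j i := by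
      intro i
      rw [hWdef]
      simp [lp.coeFn_sum, lp.coeFn_smul, Finset.sum_apply]
      exact Finset.sum_apply _ _ _
    have h1 : ∀ i, W i * x i = ∑ j, c0 j * (u j i * x i) := by
      intro i
      rw [hWi i, Finset.sum_mul]
      exact Finset.sum_congr rfl fun j _ => by ring
    rw [tsum_congr h1, Summable.tsum_finsetSum (fun j _ => ((hsummul x (u j)).mul_left (c0 j)))]
    exact Finset.sum_congr rfl fun j _ => by rw [tsum_mul_left, hx j]
  have hY : (∑ j, c0 j * y j) = ‖W‖ ^ q := by
    rw [← hpair xhat hfeas, hnq W]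
    exact tsum_congr fun i => by
      rw [hxhat_apply i, ← phi_mul_self hq (W i)]; ring
  have hWq_split : ‖W‖ ^ q = ‖W‖ ^ (q - 1) * ‖W‖ := by
    have h5 := Real.rpow_add hWpos (q - 1) 1
    rw [sub_add_cancel, Real.rpow_one] at h5
    exact h5
  -- minimality
  have hmin : ∀ x : lp (fun _ : ℕ => ℝ) (ENNReal.ofReal p),
      (∀ j, ∑' i, u j i * x i = y j) → ‖xhat‖ ≤ ‖x‖ := by
    intro x hx
    have h1 : ‖W‖ ^ q = ∑' i, W i * x i := by rw [hpair x hx, hY]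
    have h2 : ∑' i, W i * x i ≤ ∑' i, ‖x i‖ * ‖W i‖ := by
      refine Summable.tsum_le_tsum ?_ (hsummul x W) (lp.summable_mul hPQ x W)
      intro i
      calc W i * x i ≤ |W i * x i| := le_abs_self _
      _ = ‖x i‖ * ‖W i‖ := by
          rw [abs_mul, Real.norm_eq_abs, Real.norm_eq_abs]; ring
    have h3 := lp.tsum_mul_le_mul_norm' hPQ x W
    have h4 : ‖W‖ ^ (q - 1) * ‖W‖ ≤ ‖x‖ * ‖W‖ := by
      rw [← hWq_split]; linarith
    rw [hxnorm]
    exact le_of_mul_le_mul_right h4 hWpos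
  refine ⟨xhat, ⟨hfeas, hmin⟩, ?_, ?_⟩
  · -- uniqueness
    rintro x ⟨hfx, hminx⟩
    have hxn : ‖x‖ = ‖W‖ ^ (q - 1) := by
      rw [← hxnorm]
      exact le_antisymm (hminx xhat hfeas) (hmin x hfx)
    have hxpos : 0 < ‖x‖ := by
      rw [hxn]; exact Real.rpow_pos_of_pos hWpos _
    have hxsum : Summable fun i => |x i| ^ p := by
      have := (lp.memℓp x).summable (by rw [hP]; exact hp0)
      simpa [Real.norm_eq_abs, hP] using this
    have hxnormp' : ‖x‖ ^ p = ‖W‖ ^ q := by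
      rw [hxn, ← Real.rpow_mul (norm_nonneg W), hq1p]
    have hEq : ∑' i, W i * x i = ‖W‖ * ‖x‖ := by
      rw [hpair x hfx, hY, hxn, hWq_split]
      ring
    set A : ℕ → ℝ := fun i => |W i| ^ q / (q * ‖W‖ ^ q) + |x i| ^ p / (p * ‖x‖ ^ p)
        - W i * x i / (‖W‖ * ‖x‖) with hAdef
    have habpp : ∀ i, (|x i| / ‖x‖) ^ p = |x i| ^ p / ‖x‖ ^ p := fun i =>
      Real.div_rpow (abs_nonneg _) (norm_nonneg _) _
    have habqq : ∀ i, (|W i| / ‖W‖) ^ q = |W i| ^ q / ‖W‖ ^ q := fun i =>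
      Real.div_rpow (abs_nonneg _) (norm_nonneg _) _
    have hprod_le : ∀ i, W i * x i / (‖W‖ * ‖x‖) ≤ (|x i| / ‖x‖) * (|W i| / ‖W‖) := by
      intro i
      rw [div_le_iff₀ (by positivity)]
      calc W i * x i ≤ |W i * x i| := le_abs_self _
      _ = |x i| * |W i| := by rw [abs_mul]; ring
      _ = |x i| / ‖x‖ * (|W i| / ‖W‖) * (‖W‖ * ‖x‖) := by
          field_simp
    have hyoung : ∀ i, (|x i| / ‖x‖) * (|W i| / ‖W‖)
        ≤ |x i| ^ p / (p * ‖x‖ ^ p) + |W i| ^ q / (q * ‖W‖ ^ q) := by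
      intro i
      have hYg := Real.young_inequality_of_nonneg
        (a := |x i| / ‖x‖) (b := |W i| / ‖W‖) (by positivity) (by positivity) hpq'
      rw [habpp i, habqq i] at hYg
      have e1 : |x i| ^ p / ‖x‖ ^ p / p = |x i| ^ p / (p * ‖x‖ ^ p) := by ring
      have e2 : |W i| ^ q / ‖W‖ ^ q / q = |W i| ^ q / (q * ‖W‖ ^ q) := by ring
      linarith [hYg]
    have hAnn : ∀ i, 0 ≤ A i := by
      intro i
      have h1 := hprod_le i
      have h2 := hyoung i
      simp only [hAdef]
      linarith
    have hS1 : Summable fun i => |W i| ^ q / (q * ‖W‖ ^ q) := hWsum.div_const _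
    have hS2 : Summable fun i => |x i| ^ p / (p * ‖x‖ ^ p) := hxsum.div_const _
    have hS3 : Summable fun i => W i * x i / (‖W‖ * ‖x‖) := (hsummul x W).div_const _
    have hAsum : Summable A := (hS1.add hS2).sub hS3
    have hAtsum_eq : ∑' i, A i = 0 := by
      simp only [hAdef]
      rw [Summable.tsum_sub (hS1.add hS2) hS3, Summable.tsum_add hS1 hS2, tsum_div_const, tsum_div_const,
        tsum_div_const, ← hnq W, hEq, ← hnp x]
      have hWq_ne : ‖W‖ ^ q ≠ 0 := ne_of_gt (Real.rpow_pos_of_pos hWpos _)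
      have hxp_ne : ‖x‖ ^ p ≠ 0 := ne_of_gt (Real.rpow_pos_of_pos hxpos _)
      have t1 : ‖W‖ ^ q / (q * ‖W‖ ^ q) = 1 / q := by
        rw [mul_comm q, ← div_div, div_self hWq_ne]
      have t2 : ‖x‖ ^ p / (p * ‖x‖ ^ p) = 1 / p := by
        rw [mul_comm p, ← div_div, div_self hxp_ne]
      have t3 : ‖W‖ * ‖x‖ / (‖W‖ * ‖x‖) = 1 := div_self (by positivity)
      rw [t1, t2, t3]
      linarith [hpq]
    have hA0 : ∀ i, A i = 0 := by
      have h1 := hAsum.hasSum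
      rw [hAtsum_eq] at h1
      have h2 := (hasSum_zero_iff_of_nonneg hAnn).1 h1
      intro i
      exact congrFun h2 i
    have hpoint : ∀ i, x i = W i * |W i| ^ (q - 2) := by
      intro i
      have hAi : A i = 0 := hA0 i
      simp only [hAdef] at hAi
      have h3 : W i * x i / (‖W‖ * ‖x‖)
          = |x i| ^ p / (p * ‖x‖ ^ p) + |W i| ^ q / (q * ‖W‖ ^ q) := by linarith
      have hab_eq : (|x i| / ‖x‖) * (|W i| / ‖W‖)
          = (|x i| / ‖x‖) ^ p / p + (|W i| / ‖W‖) ^ q / q := by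
        rw [habpp i, habqq i]
        have e1 : |x i| ^ p / ‖x‖ ^ p / p = |x i| ^ p / (p * ‖x‖ ^ p) := by ring
        have e2 : |W i| ^ q / ‖W‖ ^ q / q = |W i| ^ q / (q * ‖W‖ ^ q) := by ring
        have h1 := hprod_le i
        have h2 := hyoung i
        linarith
      have hprod_eq : W i * x i = |x i| * |W i| := by
        have h4 : W i * x i / (‖W‖ * ‖x‖) = (|x i| / ‖x‖) * (|W i| / ‖W‖) := by
          have h2 := hyoung i
          have e1 : |x i| ^ p / ‖x‖ ^ p / p = |x i| ^ p / (p * ‖x‖ ^ p) := by ring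
          have e2 : |W i| ^ q / ‖W‖ ^ q / q = |W i| ^ q / (q * ‖W‖ ^ q) := by ring
          rw [hab_eq, habpp i, habqq i]
          linarith
        have h5 : (|x i| / ‖x‖) * (|W i| / ‖W‖) * (‖W‖ * ‖x‖) = |x i| * |W i| := by
          field_simp
        rw [div_eq_iff (by positivity : ‖W‖ * ‖x‖ ≠ 0)] at h4
        rw [h4, h5]
      have hbq : (|W i| / ‖W‖) ^ q = (|x i| / ‖x‖) ^ p :=
        young_eq hpq' (by positivity) (by positivity) hab_eq
      have h6 : |x i| ^ p = |W i| ^ q := by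
        rw [habpp i, habqq i, hxnormp'] at hbq
        have hNne : ‖W‖ ^ q ≠ 0 := ne_of_gt (Real.rpow_pos_of_pos hWpos _)
        field_simp at hbq
        linarith
      have h7 : |x i| = |W i| ^ (q - 1) := by
        have h8 : (|x i| ^ p) ^ p⁻¹ = (|W i| ^ q) ^ p⁻¹ := by rw [h6]
        rw [← Real.rpow_mul (abs_nonneg _), ← Real.rpow_mul (abs_nonneg _),
          mul_inv_cancel₀ (ne_of_gt hp0), Real.rpow_one] at h8
        rw [h8]
        congr 1
        rw [← hpq'.symm.div_conj_eq_sub_one, div_eq_mul_inv]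
      rcases lt_trichotomy (W i) 0 with hWi | hWi | hWi
      · have habsW : |W i| = -W i := abs_of_neg hWi
        have hWabs_pos : 0 < |W i| := abs_pos.2 (ne_of_lt hWi)
        have hxipos : 0 < |x i| := by
          rw [h7]; exact Real.rpow_pos_of_pos hWabs_pos _
        have hxi : x i < 0 := by
          rcases lt_trichotomy (x i) 0 with h | h | h
          · exact h
          · rw [h] at hxipos; simp at hxipos
          · nlinarith [hprod_eq, abs_nonneg (x i), abs_nonneg (W i)]
        have hxval : x i = -(|W i| ^ (q - 1)) := by
          rw [← h7, abs_of_neg hxi]; ring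
        have hWval : W i * |W i| ^ (q - 2) = -(|W i| ^ (q - 1)) := by
          rw [show q - 1 = 1 + (q - 2) by ring, Real.rpow_add hWabs_pos, Real.rpow_one,
            habsW]
          ring
        rw [hxval, hWval]
      · have hx0 : |x i| = 0 := by
          rw [h7, hWi]
          simp [Real.zero_rpow (by linarith : q - 1 ≠ 0)]
        rw [abs_eq_zero.1 hx0, hWi]
        simp
      · have habsW : |W i| = W i := abs_of_pos hWi
        have hWabs_pos : 0 < |W i| := abs_pos.2 (ne_of_gt hWi)
        have hxipos : 0 < |x i| := by
          rw [h7]; exact Real.rpow_pos_of_pos hWabs_pos _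
        have hxi : 0 < x i := by
          rcases lt_trichotomy (x i) 0 with h | h | h
          · nlinarith [hprod_eq, abs_nonneg (x i), abs_nonneg (W i)]
          · rw [h] at hxipos; simp at hxipos
          · exact h
        have hxval : x i = |W i| ^ (q - 1) := by
          rw [← h7, abs_of_pos hxi]
        have hWval : W i * |W i| ^ (q - 2) = |W i| ^ (q - 1) := by
          rw [show q - 1 = 1 + (q - 2) by ring, Real.rpow_add hWabs_pos, Real.rpow_one,
            habsW]
        rw [hxval, hWval]
    apply Subtype.ext
    funext i
    rw [hpoint i, ← hxhat_apply i]
  · -- the explicit formula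
    refine ⟨fun j => ‖W‖ ^ (q - 2) * c0 j, fun i => ?_⟩
    set lam : ℝ := ‖W‖ ^ (q - 2) with hlam
    have hlampos : 0 < lam := Real.rpow_pos_of_pos hWpos _
    have hsum_eq : (∑ j, (lam * c0 j) • u j) = lam • W := by
      rw [hWdef, Finset.smul_sum]
      exact Finset.sum_congr rfl fun j _ => mul_smul _ _ _
    rw [hsum_eq]
    have happ : (lam • W) i = lam * W i := by
      simp [lp.coeFn_smul]
    have hnorm_smul : ‖lam • W‖ = lam * ‖W‖ := by
      rw [norm_smul, Real.norm_eq_abs, abs_of_pos hlampos]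
    rw [happ, hnorm_smul, hxhat_apply i]
    have h1 : |lam * W i| ^ (q - 2) = lam ^ (q - 2) * |W i| ^ (q - 2) := by
      rw [abs_mul, abs_of_pos hlampos, Real.mul_rpow (le_of_lt hlampos) (abs_nonneg _)]
    have h2 : (lam * ‖W‖) ^ (q - 2) = lam ^ (q - 2) * lam := by
      rw [Real.mul_rpow (le_of_lt hlampos) (norm_nonneg _), ← hlam]
    rw [h1, h2]
    have hcanc : lam ^ (q - 2) ≠ 0 := ne_of_gt (Real.rpow_pos_of_pos hlampos _)
    field_simp

end Aux
end

section
/- Let u = (u_i)_{i∈ℕ} be a nonzero element of c₀ and let x = (x_i)_{i∈ℕ} ∈ ℓ₁(ℕ). Then x satisfies ‖v‖_∞ − ‖u‖_∞ ≥ Σ_{i∈ℕ} x_i (v_i − u_i) for all v ∈ c₀ if and only if x belongs to the convex hull of V(u) := {sign(u_i) e_i : i ∈ N(u)}, where N(u) := {i ∈ ℕ : |u_i| = ‖u‖_∞} (a finite set) and e_i ∈ ℓ₁(ℕ) is the i-th standard unit sequence. -/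
open Filter Topology

private lemma sign_mul_self' (a : ℝ) : Real.sign a * a = |a| := by
  rcases lt_trichotomy a 0 with h | h | h
  · rw [Real.sign_of_neg h, abs_of_neg h]; ring
  · simp [h]
  · rw [Real.sign_of_pos h, abs_of_pos h]; ring

private lemma abs_sign_le' (a : ℝ) : |Real.sign a| ≤ 1 := by
  rcases lt_trichotomy a 0 with h | h | h
  · simp [Real.sign_of_neg h]
  · simp [h]
  · simp [Real.sign_of_pos h]

private lemma summable_mul_bdd {x c : ℕ → ℝ} (hx : Summable fun i => |x i|)
    {C : ℝ} (hc : ∀ i, |c i| ≤ C) : Summable fun i => x i * c i := by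
  apply Summable.of_abs
  refine Summable.of_nonneg_of_le (fun i => abs_nonneg _) (fun i => ?_) (hx.mul_right C)
  rw [abs_mul]
  exact mul_le_mul_of_nonneg_left (hc i) (abs_nonneg _)

/-- Subdifferential of the sup-norm of `c₀` at a nonzero `u`:
an `ℓ₁` sequence `x` satisfies `Σ_i x_i (v_i − u_i) ≤ ‖v‖_∞ − ‖u‖_∞` for all `v ∈ c₀`
iff `x` lies in the convex hull of `{sign(u_i) e_i : |u_i| = ‖u‖_∞}`. -/
theorem subdifferential_supNorm_c0
    (u : ℕ → ℝ) (hu : Tendsto u atTop (𝓝 0)) (hune : u ≠ 0)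
    (x : ℕ → ℝ) (hx : Summable fun i => |x i|) :
    (∀ v : ℕ → ℝ, Tendsto v atTop (𝓝 0) →
        ∑' i, x i * (v i - u i) ≤ (⨆ i, |v i|) - ⨆ i, |u i|) ↔
      x ∈ convexHull ℝ
        {z : ℕ → ℝ | ∃ i : ℕ, |u i| = (⨆ k, |u k|) ∧
          z = Real.sign (u i) • (Pi.single i (1 : ℝ) : ℕ → ℝ)} := by
  classical
  set M := ⨆ k, |u k| with hMdef
  have bddA : ∀ f : ℕ → ℝ, Tendsto f atTop (𝓝 0) →
      BddAbove (Set.range fun i => |f i|) := by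
    intro f hf
    have : Tendsto (fun i => |f i|) atTop (𝓝 0) := by simpa using hf.abs
    exact this.bddAbove_range
  have bu := bddA u hu
  have hub : ∀ i, |u i| ≤ M := fun i => le_ciSup bu i
  have hM0 : 0 < M := by
    obtain ⟨j, hj⟩ := Function.ne_iff.mp hune
    have : (0:ℝ) < |u j| := abs_pos.mpr hj
    exact lt_of_lt_of_le this (hub j)
  constructor
  · -- forward direction
    intro H
    have hsu : Summable fun i => x i * u i := summable_mul_bdd hx hub
    have hgs : Summable fun i => |x i| * M := hx.mul_right M
    -- step 1 : M ≤ ∑' x u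
    have h1 : M ≤ ∑' i, x i * u i := by
      have h := H (fun _ => 0) tendsto_const_nhds
      have e1 : ∑' i, x i * ((0:ℝ) - u i) = -∑' i, x i * u i := by
        rw [← tsum_neg]
        exact tsum_congr fun i => by ring
      simp only [abs_zero, ciSup_const] at h
      rw [e1] at h
      linarith
    -- step 2 : ∑' x v ≤ sup |v| for all v ∈ c₀
    have h2 : ∀ v : ℕ → ℝ, Tendsto v atTop (𝓝 0) → ∑' i, x i * v i ≤ ⨆ i, |v i| := by
      intro v hv
      have hv' : Tendsto (fun i => v i + u i) atTop (𝓝 0) := by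
        simpa using hv.add hu
      have h := H (fun i => v i + u i) hv'
      have e : ∑' i, x i * (v i + u i - u i) = ∑' i, x i * v i :=
        tsum_congr fun i => by ring
      have hbv := bddA v hv
      have hsup : (⨆ i, |v i + u i|) ≤ (⨆ i, |v i|) + M := by
        apply ciSup_le
        intro i
        have h1 := abs_add_le (v i) (u i)
        have h2 := le_ciSup hbv i
        have h3 := hub i
        linarith
      rw [e] at h
      linarith
    -- step 3 : ∑' |x| ≤ 1
    have h3 : ∑' i, |x i| ≤ 1 := by
      apply Summable.tsum_le_of_sum_le hx
      intro F
      set v : ℕ → ℝ := fun i => if i ∈ F then Real.sign (x i) else 0 with hvdef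
      have hev : (fun _ => (0:ℝ)) =ᶠ[atTop] v := by
        filter_upwards [eventually_ge_atTop (F.sup id + 1)] with i hi
        have hiF : i ∉ F := by
          intro h
          have := Finset.le_sup (f := id) h
          simp only [id] at this
          omega
        simp [v, hiF]
      have hv : Tendsto v atTop (𝓝 0) := tendsto_const_nhds.congr' hev
      have h := h2 v hv
      have e : ∑' i, x i * v i = ∑ i ∈ F, |x i| := by
        rw [tsum_eq_sum (s := F) (fun i hi => by simp [v, hi])]
        refine Finset.sum_congr rfl fun i hi => ?_
        simp only [v, if_pos hi]
        rw [mul_comm]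
        exact sign_mul_self' (x i)
      have hsv : (⨆ i, |v i|) ≤ 1 := by
        apply ciSup_le
        intro i
        by_cases hiF : i ∈ F
        · simpa [v, hiF] using abs_sign_le' (x i)
        · simp [v, hiF]
      rw [e] at h
      linarith
    -- step 4 : chain of equalities
    have termle : ∀ i, x i * u i ≤ |x i| * M := by
      intro i
      calc x i * u i ≤ |x i * u i| := le_abs_self _
        _ = |x i| * |u i| := abs_mul _ _
        _ ≤ |x i| * M := mul_le_mul_of_nonneg_left (hub i) (abs_nonneg _)
    have h4 : ∑' i, x i * u i ≤ ∑' i, |x i| * M := Summable.tsum_le_tsum termle hsu hgs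
    have h5 : ∑' i, |x i| * M = (∑' i, |x i|) * M := tsum_mul_right
    have heq : ∑' i, x i * u i = ∑' i, |x i| * M := by nlinarith
    have hterm : ∀ i, x i * u i = |x i| * M := by
      intro i
      by_contra hne
      have hlt : x i * u i < |x i| * M := lt_of_le_of_ne (termle i) hne
      have := Summable.tsum_lt_tsum termle hlt hsu hgs
      linarith [heq]
    have hNx : ∀ i, |u i| ≠ M → x i = 0 := by
      intro i hiN
      by_contra hxi
      have hxi' : 0 < |x i| := abs_pos.mpr hxi
      have hle : |x i| * M ≤ |x i| * |u i| := by
        calc |x i| * M = x i * u i := (hterm i).symm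
          _ ≤ |x i * u i| := le_abs_self _
          _ = |x i| * |u i| := abs_mul _ _
      have : M ≤ |u i| := le_of_mul_le_mul_left hle hxi'
      exact hiN (le_antisymm (hub i) this)
    -- finiteness of the support
    have habs : Tendsto (fun i => |u i|) atTop (𝓝 0) := by simpa using hu.abs
    have hev : ∀ᶠ i in atTop, |u i| < M := habs.eventually (eventually_lt_nhds hM0)
    obtain ⟨I, hI⟩ := eventually_atTop.mp hev
    set t : Finset ℕ := (Finset.range I).filter (fun i => x i ≠ 0) with htdef
    have hmemt : ∀ i, x i ≠ 0 → i ∈ t := by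
      intro i hxi
      have hiN : |u i| = M := by
        by_contra h
        exact hxi (hNx i h)
      have hiR : i ∈ Finset.range I := by
        rw [Finset.mem_range]
        by_contra hiR
        push_neg at hiR
        exact absurd hiN (ne_of_lt (hI i hiR))
      exact Finset.mem_filter.mpr ⟨hiR, hxi⟩
    have hsumt : ∑ i ∈ t, |x i| = 1 := by
      have e : ∑' i, |x i| = ∑ i ∈ t, |x i| := by
        apply tsum_eq_sum
        intro i hit
        by_cases hxi : x i = 0
        · simp [hxi]
        · exact absurd (hmemt i hxi) hit
      have hT1 : ∑' i, |x i| = 1 := by nlinarith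
      rw [← e, hT1]
    have hsign : ∀ i, x i ≠ 0 → |x i| * Real.sign (u i) = x i := by
      intro i hxi
      have hiN : |u i| = M := by
        by_contra h
        exact hxi (hNx i h)
      have hui : u i ≠ 0 := by
        intro h
        rw [h, abs_zero] at hiN
        linarith
      have ht := hterm i
      rcases lt_or_gt_of_ne hui with h | h
      · have hMui : M = -u i := by rw [← hiN, abs_of_neg h]
        rw [hMui] at ht
        have h2 : (x i + |x i|) * u i = 0 := by linear_combination ht
        rcases mul_eq_zero.mp h2 with h3 | h3
        · rw [Real.sign_of_neg h]; linarith
        · exact absurd h3 (ne_of_lt h)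
      · have hMui : M = u i := by rw [← hiN, abs_of_pos h]
        rw [hMui] at ht
        have h2 : (x i - |x i|) * u i = 0 := by linear_combination ht
        rcases mul_eq_zero.mp h2 with h3 | h3
        · rw [Real.sign_of_pos h]; linarith
        · exact absurd h3 (ne_of_gt h)
    -- center of mass equals x
    have hcm : t.centerMass (fun i => |x i|) (fun i => Real.sign (u i) • (Pi.single i (1:ℝ) : ℕ → ℝ)) = x := by
      rw [Finset.centerMass_eq_of_sum_1 _ _ hsumt]
      funext j
      rw [Finset.sum_apply]
      have e : ∀ i ∈ t,
          (|x i| • (Real.sign (u i) • (Pi.single i (1:ℝ) : ℕ → ℝ))) j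
            = if j = i then |x i| * Real.sign (u i) else 0 := by
        intro i _
        simp only [Pi.smul_apply, smul_eq_mul, Pi.single_apply]
        by_cases hji : j = i <;> simp [hji]
      rw [Finset.sum_congr rfl e, Finset.sum_ite_eq t j (fun i => |x i| * Real.sign (u i))]
      by_cases hjt : j ∈ t
      · rw [if_pos hjt]
        exact hsign j (Finset.mem_filter.mp hjt).2
      · rw [if_neg hjt]
        by_contra h
        exact hjt (hmemt j fun h' => h h'.symm)
    rw [← hcm]
    apply Finset.centerMass_mem_convexHull
    · intro i _; exact abs_nonneg _
    · rw [hsumt]; norm_num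
    · intro i hi
      refine ⟨i, ?_, rfl⟩
      by_contra h
      exact (Finset.mem_filter.mp hi).2 (hNx i h)
  · -- reverse direction
    intro hmem v hv
    rw [convexHull_eq] at hmem
    obtain ⟨ι, t, w, z, hw0, hw1, hz, hxeq⟩ := hmem
    rw [Finset.centerMass_eq_of_sum_1 _ _ hw1] at hxeq
    choose! k hk hzk using hz
    have hbv := bddA v hv
    have hxj : ∀ j, x j = ∑ i ∈ t, w i * z i j := by
      intro j
      rw [← hxeq, Finset.sum_apply]
      exact Finset.sum_congr rfl fun i _ => rfl
    calc ∑' j, x j * (v j - u j)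
        = ∑' j, ∑ i ∈ t, w i * z i j * (v j - u j) := by
          refine tsum_congr fun j => ?_
          rw [hxj j, Finset.sum_mul]
      _ = ∑ i ∈ t, ∑' j, w i * z i j * (v j - u j) := by
          apply Summable.tsum_finsetSum
          intro i hi
          apply summable_of_ne_finset_zero (s := {k i})
          intro j hj
          rw [hzk i hi]
          have hjk : j ≠ k i := by simpa using hj
          simp [Pi.single_eq_of_ne hjk]
      _ ≤ ∑ i ∈ t, w i * ((⨆ j, |v j|) - M) := by
          apply Finset.sum_le_sum
          intro i hi
          have e : ∑' j, w i * z i j * (v j - u j)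
              = w i * (Real.sign (u (k i)) * (v (k i) - u (k i))) := by
            rw [tsum_eq_single (k i) (fun j hj => by
              rw [hzk i hi]
              simp [Pi.single_eq_of_ne hj])]
            rw [hzk i hi]
            simp only [Pi.smul_apply, smul_eq_mul, Pi.single_eq_same]
            ring
          rw [e]
          apply mul_le_mul_of_nonneg_left _ (hw0 i hi)
          have h1 : Real.sign (u (k i)) * v (k i) ≤ |v (k i)| := by
            calc Real.sign (u (k i)) * v (k i) ≤ |Real.sign (u (k i)) * v (k i)| := le_abs_self _
              _ = |Real.sign (u (k i))| * |v (k i)| := abs_mul _ _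
              _ ≤ 1 * |v (k i)| := mul_le_mul_of_nonneg_right (abs_sign_le' _) (abs_nonneg _)
              _ = |v (k i)| := one_mul _
          have h2 : Real.sign (u (k i)) * u (k i) = |u (k i)| := sign_mul_self' _
          have h3 : |v (k i)| ≤ ⨆ j, |v j| := le_ciSup hbv (k i)
          have h4 : |u (k i)| = M := hk i hi
          have h5 : Real.sign (u (k i)) * (v (k i) - u (k i))
              = Real.sign (u (k i)) * v (k i) - Real.sign (u (k i)) * u (k i) := by ring
          rw [h5, h2, h4]
          linarith
      _ = (⨆ j, |v j|) - M := by
          rw [← Finset.sum_mul, hw1, one_mul]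
end

section
/- Let u₁, …, u_m ∈ c₀ be linearly independent and let y ∈ ℝ^m. Then x̂ ∈ ℓ₁(ℕ) is a solution of the minimum norm interpolation problem inf{‖x‖₁ : x ∈ ℓ₁(ℕ), ⟨u_j, x⟩ = y_j for all j} if and only if ⟨u_j, x̂⟩ = y_j for all j and there exist c₁, …, c_m ∈ ℝ such that, with u := Σ_{j=1}^m c_j u_j, one has x̂ = ‖u‖_∞ · w for some w in the convex hull of V(u) := {sign(u_i) e_i : i ∈ N(u)}, where N(u) := {i ∈ ℕ : |u_i| = ‖u‖_∞}. -/
open Filter Topology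

private lemma exists_bound_of_tendsto' {f : ℕ → ℝ} (h : Tendsto f atTop (𝓝 0)) :
    ∃ M : ℝ, 0 ≤ M ∧ ∀ i, |f i| ≤ M := by
  have h' : Tendsto (fun i => |f i|) atTop (𝓝 0) := by simpa using h.abs
  have hb : BddAbove (Set.range fun i => |f i|) := h'.bddAbove_range
  exact ⟨⨆ i, |f i|, (abs_nonneg _).trans (le_ciSup hb 0), fun i => le_ciSup hb i⟩

private lemma summable_abs_mul' {a x : ℕ → ℝ} {M : ℝ} (ha : ∀ i, |a i| ≤ M)
    (hx : Summable fun i => |x i|) : Summable fun i => |a i * x i| := by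
  refine Summable.of_nonneg_of_le (fun i => abs_nonneg _) (fun i => ?_) (hx.mul_left M)
  rw [abs_mul]
  exact mul_le_mul_of_nonneg_right (ha i) (abs_nonneg _)

private lemma summable_mul_of_bdd' {a x : ℕ → ℝ} {M : ℝ} (ha : ∀ i, |a i| ≤ M)
    (hx : Summable fun i => |x i|) : Summable fun i => a i * x i :=
  (summable_abs_mul' ha hx).of_abs

private lemma tsum_abs_mul_le' {a x : ℕ → ℝ} {M : ℝ} (ha : ∀ i, |a i| ≤ M)
    (hx : Summable fun i => |x i|) : |∑' i, a i * x i| ≤ M * ∑' i, |x i| := by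
  have hs : Summable fun i => ‖a i * x i‖ := by
    simpa only [Real.norm_eq_abs] using summable_abs_mul' ha hx
  have h1 : |∑' i, a i * x i| ≤ ∑' i, |a i * x i| := by
    simpa only [Real.norm_eq_abs] using norm_tsum_le_tsum_norm hs
  refine h1.trans ?_
  calc ∑' i, |a i * x i| ≤ ∑' i, M * |x i| := by
        refine Summable.tsum_le_tsum (fun i => ?_) (summable_abs_mul' ha hx) (hx.mul_left M)
        rw [abs_mul]; exact mul_le_mul_of_nonneg_right (ha i) (abs_nonneg _)
    _ = M * ∑' i, |x i| := tsum_mul_left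

private lemma tsum_combo' {m : ℕ} {u : Fin m → ℕ → ℝ} {M : Fin m → ℝ}
    (hb : ∀ j i, |u j i| ≤ M j) (c : Fin m → ℝ) {x : ℕ → ℝ}
    (hx : Summable fun i => |x i|) :
    ∑' i, (∑ j, c j * u j i) * x i = ∑ j, c j * ∑' i, u j i * x i := by
  have h1 : ∀ i, (∑ j, c j * u j i) * x i = ∑ j, c j * (u j i * x i) := fun i => by
    rw [Finset.sum_mul]; exact Finset.sum_congr rfl fun j _ => mul_assoc _ _ _
  calc ∑' i, (∑ j, c j * u j i) * x i = ∑' i, ∑ j, c j * (u j i * x i) :=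
        tsum_congr h1
    _ = ∑ j, ∑' i, c j * (u j i * x i) :=
        Summable.tsum_finsetSum (fun j _ => (summable_mul_of_bdd' (hb j) hx).mul_left (c j))
    _ = ∑ j, c j * ∑' i, u j i * x i :=
        Finset.sum_congr rfl fun j _ => tsum_mul_left

/-- Feasibility for the interpolation problem with data `z`. -/
private def l1Feas {m : ℕ} (u : Fin m → ℕ → ℝ) (z : Fin m → ℝ) (x : ℕ → ℝ) : Prop :=
  (Summable fun i => |x i|) ∧ ∀ j, ∑' i, u j i * x i = z j

/-- The set of attainable `ℓ₁` norms of interpolants of `z`. -/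
private def l1S {m : ℕ} (u : Fin m → ℕ → ℝ) (z : Fin m → ℝ) : Set ℝ :=
  {r | ∃ x, l1Feas u z x ∧ ∑' i, |x i| = r}

/-- The value function of the interpolation problem. -/
private noncomputable def l1p {m : ℕ} (u : Fin m → ℕ → ℝ) (z : Fin m → ℝ) : ℝ :=
  sInf (l1S u z)

/-- Representer theorem for minimum norm interpolation in `ℓ₁(ℕ)`
with linearly independent functionals `u₁, …, u_m ∈ c₀`: `x̂` is a solution iff it
interpolates and `x̂ = ‖u‖_∞ • w` for some `w` in the convex hull of
`{sign(u_i) e_i : |u_i| = ‖u‖_∞}`, where `u = Σ c_j u_j`. -/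
theorem minimum_norm_interpolation_l1
    {m : ℕ} (u : Fin m → ℕ → ℝ)
    (hu0 : ∀ j, Tendsto (u j) atTop (𝓝 0)) (hu : LinearIndependent ℝ u)
    (y : Fin m → ℝ) (xhat : ℕ → ℝ) (hxhat : Summable fun i => |xhat i|) :
    ((∀ j, ∑' i, u j i * xhat i = y j) ∧
        ∀ x : ℕ → ℝ, Summable (fun i => |x i|) →
          (∀ j, ∑' i, u j i * x i = y j) → ∑' i, |xhat i| ≤ ∑' i, |x i|) ↔
      ((∀ j, ∑' i, u j i * xhat i = y j) ∧
        ∃ c : Fin m → ℝ, ∃ w ∈ convexHull ℝ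
          {z : ℕ → ℝ | ∃ i : ℕ, |(∑ j, c j • u j) i| = (⨆ k, |(∑ j, c j • u j) k|) ∧
            z = Real.sign ((∑ j, c j • u j) i) • (Pi.single i (1 : ℝ) : ℕ → ℝ)},
          xhat = (⨆ k, |(∑ j, c j • u j) k|) • w) := by
  classical
  -- bounds on the `u j`
  obtain ⟨M, hM0, hMb⟩ : ∃ M : Fin m → ℝ, (∀ j, 0 ≤ M j) ∧ ∀ j i, |u j i| ≤ M j := by
    choose M h1 h2 using fun j => exists_bound_of_tendsto' (hu0 j)
    exact ⟨M, h1, h2⟩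
  have hUe : ∀ (c : Fin m → ℝ) (i : ℕ), (∑ j, c j • u j) i = ∑ j, c j * u j i := by
    intro c i; simp [Finset.sum_apply]
  have hUt : ∀ c : Fin m → ℝ, Tendsto (∑ j, c j • u j) atTop (𝓝 0) := by
    intro c
    have h1 : Tendsto (fun i => ∑ j, c j * u j i) atTop (𝓝 (∑ j : Fin m, c j * 0)) :=
      tendsto_finset_sum _ (fun j _ => ((hu0 j).const_mul (c j)))
    simp only [mul_zero, Finset.sum_const_zero] at h1
    have h2 : (∑ j, c j • u j) = fun i => ∑ j, c j * u j i := funext fun i => hUe c i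
    rw [h2]
    exact h1
  have hcombo : ∀ (c : Fin m → ℝ) (x : ℕ → ℝ), (Summable fun i => |x i|) →
      ∑' i, (∑ j, c j • u j) i * x i = ∑ j, c j * ∑' i, u j i * x i := by
    intro c x hx
    simp only [hUe]
    exact tsum_combo' hMb c hx
  constructor
  · -- forward direction
    rintro ⟨hint, hmin⟩
    refine ⟨hint, ?_⟩
    set v : ℝ := ∑' i, |xhat i| with hv
    have hv0 : 0 ≤ v := tsum_nonneg fun i => abs_nonneg _
    rcases eq_or_lt_of_le hv0 with hveq | hvpos
    · -- degenerate case : xhat = 0, take c = 0, w = 0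
      have hx0 : xhat = 0 := by
        funext i
        have h1 : |xhat i| ≤ v := Summable.le_tsum hxhat i fun j _ => abs_nonneg _
        rw [← hveq] at h1
        have : |xhat i| = 0 := le_antisymm h1 (abs_nonneg _)
        simpa [abs_eq_zero] using this
      refine ⟨0, 0, ?_, ?_⟩
      · apply subset_convexHull
        refine ⟨0, ?_, ?_⟩
        · simp [ciSup_const]
        · simp
      · simp [hx0]
    · -- nondegenerate case
      have hp_nonneg : ∀ z, 0 ≤ l1p u z := by
        intro z
        refine Real.sInf_nonneg ?_
        rintro r ⟨x, _, rfl⟩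
        exact tsum_nonneg fun i => abs_nonneg _
      have hSbdd : ∀ z, BddBelow (l1S u z) := by
        rintro z
        refine ⟨0, ?_⟩
        rintro r ⟨x, _, rfl⟩
        exact tsum_nonneg fun i => abs_nonneg _
      have hp_le : ∀ z x, l1Feas u z x → l1p u z ≤ ∑' i, |x i| := by
        intro z x hx
        exact csInf_le (hSbdd z) ⟨x, hx, rfl⟩
      have hscal : ∀ (a : ℝ) (z x), l1Feas u z x → l1Feas u (a • z) (fun i => a * x i) := by
        rintro a z x ⟨hx1, hx2⟩
        refine ⟨by simpa [abs_mul] using hx1.mul_left |a|, fun j => ?_⟩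
        have h3 : ∀ i, u j i * (a * x i) = a * (u j i * x i) := fun i => by ring
        simp only [h3, tsum_mul_left, hx2 j, Pi.smul_apply, smul_eq_mul]
      have hadd : ∀ (z z' x x'), l1Feas u z x → l1Feas u z' x' →
          l1Feas u (z + z') (fun i => x i + x' i) := by
        rintro z z' x x' ⟨hx1, hx2⟩ ⟨hx'1, hx'2⟩
        constructor
        · exact Summable.of_nonneg_of_le (fun i => abs_nonneg _)
            (fun i => abs_add_le _ _) (hx1.add hx'1)
        · intro j
          have h1 : Summable fun i => u j i * x i := summable_mul_of_bdd' (hMb j) hx1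
          have h2 : Summable fun i => u j i * x' i := summable_mul_of_bdd' (hMb j) hx'1
          have h3 : ∀ i, u j i * (x i + x' i) = u j i * x i + u j i * x' i :=
            fun i => by ring
          simp only [h3, Summable.tsum_add h1 h2, hx2 j, hx'2 j, Pi.add_apply]
      have hSne_of : ∀ z x, l1Feas u z x → (l1S u z).Nonempty :=
        fun z x hx => ⟨_, x, hx, rfl⟩
      have hp_scale_le : ∀ (a : ℝ), 0 < a → ∀ z, (l1S u z).Nonempty →
          l1p u (a • z) ≤ a * l1p u z := by
        intro a ha z hz
        rw [mul_comm a (l1p u z), ← div_le_iff₀ ha]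
        refine le_csInf hz ?_
        rintro r ⟨x, hx, rfl⟩
        rw [div_le_iff₀ ha]
        calc l1p u (a • z) ≤ ∑' i, |a * x i| := hp_le _ _ (hscal a z x hx)
          _ = a * ∑' i, |x i| := by
              simp only [abs_mul, abs_of_pos ha, tsum_mul_left]
          _ = (∑' i, |x i|) * a := mul_comm _ _
      have hp_scale : ∀ (a : ℝ), 0 < a → ∀ z, (l1S u z).Nonempty →
          l1p u (a • z) = a * l1p u z := by
        intro a ha z hz
        refine le_antisymm (hp_scale_le a ha z hz) ?_
        obtain ⟨r, x, hx, rfl⟩ := hz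
        have hz' : (l1S u (a • z)).Nonempty := hSne_of _ _ (hscal a z x hx)
        have h1 := hp_scale_le a⁻¹ (by positivity) (a • z) hz'
        rw [smul_smul, inv_mul_cancel₀ ha.ne', one_smul] at h1
        have h2 := mul_le_mul_of_nonneg_left h1 ha.le
        rwa [← mul_assoc, mul_inv_cancel₀ ha.ne', one_mul] at h2
      have hp_add : ∀ z z', (l1S u z).Nonempty → (l1S u z').Nonempty →
          l1p u (z + z') ≤ l1p u z + l1p u z' := by
        intro z z' hz hz'
        have key : ∀ r ∈ l1S u z, ∀ r' ∈ l1S u z', l1p u (z + z') ≤ r + r' := by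
          rintro r ⟨x, hx, rfl⟩ r' ⟨x', hx', rfl⟩
          refine (hp_le _ _ (hadd z z' x x' hx hx')).trans ?_
          have h1 : Summable fun i => |x i| + |x' i| := hx.1.add hx'.1
          have h2 : Summable fun i => |x i + x' i| :=
            Summable.of_nonneg_of_le (fun i => abs_nonneg _) (fun i => abs_add_le _ _) h1
          calc ∑' i, |x i + x' i| ≤ ∑' i, (|x i| + |x' i|) :=
                Summable.tsum_le_tsum (fun i => abs_add_le _ _) h2 h1
            _ = ∑' i, |x i| + ∑' i, |x' i| := Summable.tsum_add hx.1 hx'.1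
        have h1 : ∀ r ∈ l1S u z, l1p u (z + z') - r ≤ l1p u z' :=
          fun r hr => le_csInf hz' fun r' hr' => by linarith [key r hr r' hr']
        have h2 : l1p u (z + z') - l1p u z' ≤ l1p u z :=
          le_csInf hz fun r hr => by linarith [h1 r hr]
        linarith
      -- the subspace of attainable right-hand sides
      obtain ⟨R, hRmem⟩ : ∃ R : Submodule ℝ (Fin m → ℝ),
          ∀ z, z ∈ R ↔ ∃ x, l1Feas u z x := by
        refine ⟨{ carrier := {z | ∃ x, l1Feas u z x}
                  add_mem' := ?_
                  zero_mem' := ?_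
                  smul_mem' := ?_ }, fun z => Iff.rfl⟩
        · rintro z z' ⟨x, hx⟩ ⟨x', hx'⟩
          exact ⟨_, hadd _ _ _ _ hx hx'⟩
        · refine ⟨0, ?_, fun j => by simp⟩
          simpa using summable_zero
        · rintro a z ⟨x, hx⟩
          exact ⟨_, hscal a z x hx⟩
      have hyR : y ∈ R := (hRmem y).2 ⟨xhat, hxhat, hint⟩
      have hy0 : y ≠ 0 := by
        intro h
        have h2 := hmin 0 (by simpa using summable_zero) (fun j => by simp [h])
        simp only [Pi.zero_apply, abs_zero, tsum_zero] at h2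
        exact absurd h2 (not_le.2 hvpos)
      have hSneR : ∀ z : R, (l1S u (z : Fin m → ℝ)).Nonempty := by
        rintro ⟨z, hz⟩
        obtain ⟨x, hx⟩ := (hRmem z).1 hz
        exact hSne_of _ _ hx
      set yR : R := ⟨y, hyR⟩ with hyRdef
      have hyR0 : yR ≠ 0 := fun h => hy0 (congrArg Subtype.val h)
      set f : R →ₗ.[ℝ] ℝ := LinearPMap.mkSpanSingleton yR v hyR0 with hfdef
      set N : R → ℝ := fun z => l1p u (z : Fin m → ℝ) with hN
      have hpy : l1p u y = v := by
        refine le_antisymm (hp_le _ _ ⟨hxhat, hint⟩) ?_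
        refine le_csInf (hSne_of _ _ ⟨hxhat, hint⟩) ?_
        rintro r ⟨x, ⟨hx1, hx2⟩, rfl⟩
        exact hmin x hx1 hx2
      have hfN : ∀ x : f.domain, f x ≤ N x := by
        rintro ⟨x, hx⟩
        obtain ⟨t, ht⟩ := Submodule.mem_span_singleton.1 hx
        have happ : f ⟨x, hx⟩ = t * v := by
          have h0 : f ⟨t • yR, ht ▸ hx⟩ = t • v :=
            LinearPMap.mkSpanSingleton'_apply _ _ _ t _
          have hxt : (⟨x, hx⟩ : f.domain) = ⟨t • yR, ht ▸ hx⟩ := Subtype.ext ht.symm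
          rw [hxt, h0, smul_eq_mul]
        rw [happ]
        have hxy : (x : Fin m → ℝ) = t • y := by
          have := congrArg Subtype.val ht
          exact this.symm
        show t * v ≤ l1p u (x : Fin m → ℝ)
        rw [hxy]
        rcases lt_trichotomy t 0 with htneg | htzero | htpos
        · have h1 : l1p u ((-t) • y) = (-t) * l1p u y :=
            hp_scale (-t) (by linarith) y (hSneR yR)
          have h2 : l1p u (t • y + (-t) • y) ≤ l1p u (t • y) + l1p u ((-t) • y) :=
            hp_add _ _ (hSneR (t • yR)) (hSneR ((-t) • yR))
          have h3 : t • y + (-t) • y = 0 := by rw [← add_smul]; simp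
          rw [h3, h1, hpy] at h2
          have h4 : (0 : ℝ) ≤ l1p u 0 := hp_nonneg 0
          nlinarith [h2, h4]
        · subst htzero
          simpa using hp_nonneg ((0 : ℝ) • y)
        · have h1 : l1p u y ≤ t⁻¹ * l1p u (t • y) := by
            have h2 : l1p u (t⁻¹ • (t • y)) ≤ t⁻¹ * l1p u (t • y) :=
              hp_scale_le t⁻¹ (by positivity) (t • y) (hSneR (t • yR))
            rwa [smul_smul, inv_mul_cancel₀ htpos.ne', one_smul] at h2
          have h3 := mul_le_mul_of_nonneg_left h1 htpos.le
          rw [← mul_assoc, mul_inv_cancel₀ htpos.ne', one_mul, hpy] at h3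
          exact h3
      have hNhom : ∀ a : ℝ, 0 < a → ∀ z : R, N (a • z) = a * N z := by
        intro a ha z
        show l1p u ((a • z : R) : Fin m → ℝ) = a * l1p u (z : Fin m → ℝ)
        rw [Submodule.coe_smul]
        exact hp_scale a ha _ (hSneR z)
      have hNadd : ∀ z z' : R, N (z + z') ≤ N z + N z' := by
        intro z z'
        show l1p u ((z + z' : R) : Fin m → ℝ) ≤ _
        rw [Submodule.coe_add]
        exact hp_add _ _ (hSneR z) (hSneR z')
      obtain ⟨g, hg_eq, hg_le⟩ := exists_extension_of_le_sublinear f N hNhom hNadd hfN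
      have hgy : g yR = v := by
        have h1 := hg_eq ⟨yR, Submodule.mem_span_singleton_self yR⟩
        have h2 : f ⟨yR, Submodule.mem_span_singleton_self yR⟩ = v :=
          LinearPMap.mkSpanSingleton_apply ℝ ℝ hyR0 v
        rw [h2] at h1
        exact h1
      obtain ⟨G, hG⟩ := g.exists_extend
      have hGR : ∀ z : R, G (z : Fin m → ℝ) = g z := fun z => LinearMap.congr_fun hG z
      set c' : Fin m → ℝ := fun j => G (Pi.single j 1) with hc'
      have hGz : ∀ z : Fin m → ℝ, G z = ∑ j, z j * c' j := by
        intro z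
        have h1 : z = ∑ j, Pi.single j (z j) := (Finset.univ_sum_single z).symm
        conv_lhs => rw [h1]
        rw [map_sum]
        refine Finset.sum_congr rfl fun j _ => ?_
        have h2 : (Pi.single j (z j) : Fin m → ℝ) = z j • (Pi.single j (1 : ℝ) : Fin m → ℝ) := by
          rw [← Pi.single_smul, smul_eq_mul, mul_one]
        rw [h2, map_smul, smul_eq_mul]
      set u' : ℕ → ℝ := fun i => ∑ j, c' j * u j i with hu'
      have hu't : Tendsto u' atTop (𝓝 0) := by
        have h1 : Tendsto (fun i => ∑ j, c' j * u j i) atTop (𝓝 (∑ j : Fin m, c' j * 0)) :=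
          tendsto_finset_sum _ (fun j _ => ((hu0 j).const_mul (c' j)))
        simpa using h1
      have hFeas_single : ∀ i : ℕ, l1Feas u (fun j => u j i) (Pi.single i 1) := by
        intro i
        constructor
        · refine summable_of_ne_finset_zero (s := {i}) fun n hn => ?_
          simp only [Finset.mem_singleton] at hn
          simp [Pi.single_eq_of_ne hn]
        · intro j
          rw [tsum_eq_single i]
          · simp
          · intro n hn
            simp [Pi.single_eq_of_ne hn]
      have htsum_single : ∀ i : ℕ, ∑' n, |(Pi.single i 1 : ℕ → ℝ) n| = 1 := by
        intro i
        rw [tsum_eq_single i]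
        · simp
        · intro n hn
          simp [Pi.single_eq_of_ne hn]
      have hbound : ∀ i, |u' i| ≤ 1 := by
        intro i
        have hmemR : (fun j => u j i) ∈ R := (hRmem _).2 ⟨_, hFeas_single i⟩
        have hple : l1p u (fun j => u j i) ≤ 1 := by
          have h1 := hp_le _ _ (hFeas_single i)
          rwa [htsum_single i] at h1
        have hFn : l1Feas u (-(fun j => u j i)) (fun n => -(Pi.single i 1 : ℕ → ℝ) n) := by
          constructor
          · simpa [abs_neg] using (hFeas_single i).1
          · intro j
            rw [tsum_eq_single i]
            · simp
            · intro n hn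
              simp [Pi.single_eq_of_ne hn]
        have hmemR' : -(fun j => u j i) ∈ R := (hRmem _).2 ⟨_, hFn⟩
        have hple' : l1p u (-(fun j => u j i)) ≤ 1 := by
          have h1 := hp_le _ _ hFn
          refine h1.trans ?_
          simp only [abs_neg]
          rw [htsum_single i]
        have e1 : u' i = G (fun j => u j i) := by
          rw [hGz]
          exact Finset.sum_congr rfl fun j _ => mul_comm _ _
        have h1 : u' i ≤ 1 := by
          rw [e1, hGR ⟨_, hmemR⟩]
          exact (hg_le ⟨_, hmemR⟩).trans hple
        have h2 : -u' i ≤ 1 := by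
          have e3 : -u' i = G (-(fun j => u j i)) := by rw [map_neg, ← e1]
          rw [e3, hGR ⟨_, hmemR'⟩]
          exact (hg_le ⟨_, hmemR'⟩).trans hple'
        rw [abs_le]
        constructor <;> linarith
      have hvy : ∑ j, c' j * y j = v := by
        have h1 : G y = g yR := hGR yR
        rw [hgy] at h1
        rw [← h1, hGz]
        exact Finset.sum_congr rfl fun j _ => mul_comm _ _
      have hTxhat : ∑' i, u' i * xhat i = v := by
        calc ∑' i, u' i * xhat i = ∑ j, c' j * ∑' i, u j i * xhat i :=
              tsum_combo' hMb c' hxhat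
          _ = ∑ j, c' j * y j := Finset.sum_congr rfl fun j _ => by rw [hint j]
          _ = v := hvy
      have hsum_u'x : Summable fun i => u' i * xhat i :=
        summable_mul_of_bdd' hbound hxhat
      have hCS : ∀ i, u' i * xhat i = |xhat i| := by
        have hD : ∀ i, 0 ≤ |xhat i| - u' i * xhat i := by
          intro i
          have h1 : u' i * xhat i ≤ |u' i * xhat i| := le_abs_self _
          have h2 : |u' i * xhat i| ≤ |xhat i| := by
            rw [abs_mul]
            calc |u' i| * |xhat i| ≤ 1 * |xhat i| :=
                  mul_le_mul_of_nonneg_right (hbound i) (abs_nonneg _)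
              _ = |xhat i| := one_mul _
          linarith
        have hDsum : Summable fun i => |xhat i| - u' i * xhat i := hxhat.sub hsum_u'x
        have hDzero : ∑' i, (|xhat i| - u' i * xhat i) = 0 := by
          rw [Summable.tsum_sub hxhat hsum_u'x, hTxhat, ← hv, sub_self]
        intro i
        have h1 : |xhat i| - u' i * xhat i ≤ 0 := by
          rw [← hDzero]
          exact Summable.le_tsum hDsum i fun j _ => hD j
        have h2 := hD i
        linarith
      have hone : ∀ i, xhat i ≠ 0 → |u' i| = 1 := by
        intro i hi
        have h1 : |u' i| * |xhat i| = 1 * |xhat i| := by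
          rw [← abs_mul, hCS i, one_mul, abs_abs]
        exact mul_right_cancel₀ (abs_ne_zero.2 hi) h1
      obtain ⟨i₀, hi₀⟩ : ∃ i, xhat i ≠ 0 := by
        by_contra h
        push_neg at h
        have hz : v = 0 := by
          rw [hv]
          simp [h]
        linarith
      obtain ⟨n, hn⟩ : ∃ n, ∀ i ≥ n, |u' i| < 1 := by
        have h' : Tendsto (fun i => |u' i|) atTop (𝓝 0) := by simpa using hu't.abs
        exact eventually_atTop.1 (h'.eventually (gt_mem_nhds one_pos))
      have hsupp : ∀ i, n ≤ i → xhat i = 0 := by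
        intro i hi
        by_contra h
        exact absurd (hone i h) (hn i hi).ne
      -- the final certificate
      set c : Fin m → ℝ := fun j => v * c' j with hcdef
      have hUc : ∀ i, (∑ j, c j • u j) i = v * u' i := by
        intro i
        rw [hUe]
        simp only [hcdef, hu', Finset.mul_sum]
        exact Finset.sum_congr rfl fun j _ => by ring
      have hbddU : BddAbove (Set.range fun k => |(∑ j, c j • u j) k|) := by
        refine ⟨v, ?_⟩
        rintro r ⟨k, rfl⟩
        show |(∑ j, c j • u j) k| ≤ v
        rw [hUc, abs_mul, abs_of_pos hvpos]
        calc v * |u' k| ≤ v * 1 := mul_le_mul_of_nonneg_left (hbound k) hvpos.le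
          _ = v := mul_one v
      have hsupU : (⨆ k, |(∑ j, c j • u j) k|) = v := by
        refine le_antisymm (ciSup_le fun k => ?_) ?_
        · rw [hUc, abs_mul, abs_of_pos hvpos]
          calc v * |u' k| ≤ v * 1 := mul_le_mul_of_nonneg_left (hbound k) hvpos.le
            _ = v := mul_one v
        · have h1 : |(∑ j, c j • u j) i₀| = v := by
            rw [hUc, abs_mul, abs_of_pos hvpos, hone i₀ hi₀, mul_one]
          rw [← h1]
          exact le_ciSup hbddU i₀
      set w : ℕ → ℝ := fun i => xhat i / v with hwdef
      set a : ℕ → ℝ := fun i => |xhat i| / v with hadef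
      set zz : ℕ → (ℕ → ℝ) := fun i =>
        if xhat i = 0 then Real.sign ((∑ j, c j • u j) i₀) • (Pi.single i₀ (1 : ℝ) : ℕ → ℝ)
        else Real.sign ((∑ j, c j • u j) i) • (Pi.single i (1 : ℝ) : ℕ → ℝ) with hzz
      have ha0 : ∀ i ∈ Finset.range n, 0 ≤ a i :=
        fun i _ => div_nonneg (abs_nonneg _) hvpos.le
      have hsum_xhat : ∑ i ∈ Finset.range n, |xhat i| = v := by
        rw [hv]
        refine (tsum_eq_sum ?_).symm
        intro i hi
        rw [hsupp i (le_of_not_gt fun hlt => hi (Finset.mem_range.2 hlt))]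
        simp
      have ha1 : ∑ i ∈ Finset.range n, a i = 1 := by
        simp only [hadef]
        rw [← Finset.sum_div, hsum_xhat, div_self hvpos.ne']
      have hmemSU : ∀ i, xhat i ≠ 0 →
          (Real.sign ((∑ j, c j • u j) i) • (Pi.single i (1 : ℝ) : ℕ → ℝ)) ∈
            {z : ℕ → ℝ | ∃ i : ℕ, |(∑ j, c j • u j) i| = (⨆ k, |(∑ j, c j • u j) k|) ∧
              z = Real.sign ((∑ j, c j • u j) i) • (Pi.single i (1 : ℝ) : ℕ → ℝ)} := by
        intro i hi
        refine ⟨i, ?_, rfl⟩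
        rw [hsupU, hUc, abs_mul, abs_of_pos hvpos, hone i hi, mul_one]
      have hzS : ∀ i ∈ Finset.range n, zz i ∈
          {z : ℕ → ℝ | ∃ i : ℕ, |(∑ j, c j • u j) i| = (⨆ k, |(∑ j, c j • u j) k|) ∧
            z = Real.sign ((∑ j, c j • u j) i) • (Pi.single i (1 : ℝ) : ℕ → ℝ)} := by
        intro i _
        by_cases h : xhat i = 0
        · simp only [hzz, if_pos h]
          exact hmemSU i₀ hi₀
        · simp only [hzz, if_neg h]
          exact hmemSU i h
      have hsgn : ∀ i, xhat i ≠ 0 → a i * Real.sign ((∑ j, c j • u j) i) = w i := by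
        intro i hi
        rcases lt_or_gt_of_ne hi with hneg | hpos
        · have hu'i : u' i = -1 := by
            have h1 : u' i * xhat i = (-1) * xhat i := by
              rw [hCS i, abs_of_neg hneg]; ring
            exact mul_right_cancel₀ hi h1
          have hUi : (∑ j, c j • u j) i = -v := by rw [hUc, hu'i]; ring
          rw [hUi, Real.sign_of_neg (by linarith)]
          simp only [hadef, hwdef]
          rw [abs_of_neg hneg]
          ring
        · have hu'i : u' i = 1 := by
            have h1 : u' i * xhat i = 1 * xhat i := by
              rw [hCS i, abs_of_pos hpos]; ring
            exact mul_right_cancel₀ hi h1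
          have hUi : (∑ j, c j • u j) i = v := by rw [hUc, hu'i]; ring
          rw [hUi, Real.sign_of_pos hvpos]
          simp only [hadef, hwdef]
          rw [abs_of_pos hpos]
          ring
      have hcm : (Finset.range n).centerMass a zz = w := by
        rw [Finset.centerMass_eq_of_sum_1 _ _ ha1]
        have hterm : ∀ i ∈ Finset.range n,
            a i • zz i = w i • (Pi.single i (1 : ℝ) : ℕ → ℝ) := by
          intro i _
          by_cases h : xhat i = 0
          · have ha' : a i = 0 := by simp only [hadef]; rw [h]; simp
            have hw' : w i = 0 := by simp only [hwdef]; rw [h]; simp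
            rw [ha', hw', zero_smul, zero_smul]
          · simp only [hzz, if_neg h]
            rw [smul_smul, hsgn i h]
        rw [Finset.sum_congr rfl hterm]
        funext k
        rw [Finset.sum_apply]
        by_cases hk : k ∈ Finset.range n
        · rw [Finset.sum_eq_single k]
          · simp
          · intro i _ hik
            simp [Pi.single_eq_of_ne (Ne.symm hik)]
          · intro h
            exact absurd hk h
        · rw [Finset.sum_eq_zero]
          · have h0 : xhat k = 0 :=
              hsupp k (le_of_not_gt fun hlt => hk (Finset.mem_range.2 hlt))
            simp only [hwdef]
            rw [h0]
            simp
          · intro i hi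
            have hik : i ≠ k := fun h => hk (h ▸ hi)
            simp [Pi.single_eq_of_ne (Ne.symm hik)]
      refine ⟨c, w, ?_, ?_⟩
      · have hmem := Finset.centerMass_mem_convexHull (Finset.range n) ha0
          (by rw [ha1]; norm_num) hzS
        rwa [hcm] at hmem
      · rw [hsupU]
        funext i
        rw [Pi.smul_apply, smul_eq_mul]
        simp only [hwdef]
        field_simp
  · -- backward direction
    rintro ⟨hint, c, w, hwmem, hxw⟩
    refine ⟨hint, ?_⟩
    intro x hx hxint
    set U : ℕ → ℝ := ∑ j, c j • u j with hUdef
    set s : ℝ := ⨆ k, |U k| with hsdef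
    have hUtend : Tendsto U atTop (𝓝 0) := hUt c
    have hbddU : BddAbove (Set.range fun k => |U k|) := by
      have h1 : Tendsto (fun k => |U k|) atTop (𝓝 0) := by simpa using hUtend.abs
      exact h1.bddAbove_range
    have hUb : ∀ i, |U i| ≤ s := fun i => le_ciSup hbddU i
    have hs0 : 0 ≤ s := (abs_nonneg _).trans (hUb 0)
    rw [convexHull_eq] at hwmem
    obtain ⟨ι, t, a, z, ha0, ha1, hzS, hcm⟩ := hwmem
    rw [Finset.centerMass_eq_of_sum_1 _ _ ha1] at hcm
    have hzS' : ∀ i ∈ t, ∃ k : ℕ, |U k| = s ∧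
        z i = Real.sign (U k) • (Pi.single k (1 : ℝ) : ℕ → ℝ) := hzS
    choose kk hk1 hk2 using hzS'
    have hz_apply : ∀ (i : ι) (hi : i ∈ t) (nn : ℕ),
        z i nn = Real.sign (U (kk i hi)) * (Pi.single (kk i hi) (1 : ℝ) : ℕ → ℝ) nn := by
      intro i hi nn
      rw [hk2 i hi]
      simp
    have habs_sign : ∀ r : ℝ, |Real.sign r| ≤ 1 := by
      intro r
      rcases Real.sign_apply_eq r with h | h | h <;> rw [h] <;> norm_num
    have hz_tsum_abs : ∀ (i : ι) (hi : i ∈ t),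
        (Summable fun nn => |z i nn|) ∧ ∑' nn, |z i nn| ≤ 1 := by
      intro i hi
      have hzero : ∀ nn, nn ∉ ({kk i hi} : Finset ℕ) → |z i nn| = 0 := by
        intro nn hnn
        simp only [Finset.mem_singleton] at hnn
        rw [hz_apply i hi, Pi.single_eq_of_ne hnn]
        simp
      have hsum : Summable fun nn => |z i nn| := summable_of_ne_finset_zero hzero
      refine ⟨hsum, ?_⟩
      rw [tsum_eq_sum hzero, Finset.sum_singleton, hz_apply i hi, Pi.single_eq_same,
        mul_one]
      exact habs_sign _
    have hz_T : ∀ (i : ι) (hi : i ∈ t), ∑' nn, U nn * z i nn = s := by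
      intro i hi
      have hzero : ∀ nn, nn ≠ kk i hi → U nn * z i nn = 0 := by
        intro nn hnn
        rw [hz_apply i hi, Pi.single_eq_of_ne hnn]
        simp
      rw [tsum_eq_single (kk i hi) hzero, hz_apply i hi, Pi.single_eq_same, mul_one]
      have h1 : U (kk i hi) * Real.sign (U (kk i hi)) = |U (kk i hi)| := by
        rcases lt_trichotomy (U (kk i hi)) 0 with h | h | h
        · rw [Real.sign_of_neg h, abs_of_neg h]; ring
        · rw [h]; simp
        · rw [Real.sign_of_pos h, abs_of_pos h]; ring
      rw [h1]
      exact hk1 i hi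
    have hw_eq : ∀ nn, w nn = ∑ i ∈ t, a i * z i nn := by
      intro nn
      rw [← hcm, Finset.sum_apply]
      simp
    have hle_abs : ∀ nn, |w nn| ≤ ∑ i ∈ t, a i * |z i nn| := by
      intro nn
      rw [hw_eq nn]
      refine (Finset.abs_sum_le_sum_abs _ _).trans ?_
      refine Finset.sum_le_sum fun i hi => ?_
      rw [abs_mul, abs_of_nonneg (ha0 i hi)]
    have hsum2 : Summable fun nn => ∑ i ∈ t, a i * |z i nn| :=
      summable_sum fun i hi => ((hz_tsum_abs i hi).1.mul_left (a i))
    have hw_sum_abs : Summable fun nn => |w nn| :=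
      Summable.of_nonneg_of_le (fun nn => abs_nonneg _) hle_abs hsum2
    have hw_tsum_le : ∑' nn, |w nn| ≤ 1 := by
      refine (Summable.tsum_le_tsum hle_abs hw_sum_abs hsum2).trans ?_
      rw [Summable.tsum_finsetSum (fun i hi => ((hz_tsum_abs i hi).1.mul_left (a i)))]
      calc ∑ i ∈ t, ∑' nn, a i * |z i nn|
          = ∑ i ∈ t, a i * ∑' nn, |z i nn| :=
            Finset.sum_congr rfl fun i hi => tsum_mul_left
        _ ≤ ∑ i ∈ t, a i * 1 := by
            refine Finset.sum_le_sum fun i hi => ?_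
            exact mul_le_mul_of_nonneg_left (hz_tsum_abs i hi).2 (ha0 i hi)
        _ = 1 := by simp only [mul_one]; exact ha1
    have hTw : ∑' nn, U nn * w nn = s := by
      have hterm : ∀ nn, U nn * w nn = ∑ i ∈ t, a i * (U nn * z i nn) := by
        intro nn
        rw [hw_eq nn, Finset.mul_sum]
        exact Finset.sum_congr rfl fun i hi => by ring
      have hsumi : ∀ i ∈ t, Summable fun nn => a i * (U nn * z i nn) := by
        intro i hi
        refine Summable.mul_left _ ?_
        refine summable_of_ne_finset_zero (s := {kk i hi}) fun nn hnn => ?_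
        simp only [Finset.mem_singleton] at hnn
        rw [hz_apply i hi, Pi.single_eq_of_ne hnn]
        simp
      calc ∑' nn, U nn * w nn = ∑' nn, ∑ i ∈ t, a i * (U nn * z i nn) :=
            tsum_congr hterm
        _ = ∑ i ∈ t, ∑' nn, a i * (U nn * z i nn) := Summable.tsum_finsetSum hsumi
        _ = ∑ i ∈ t, a i * ∑' nn, U nn * z i nn :=
            Finset.sum_congr rfl fun i hi => tsum_mul_left
        _ = ∑ i ∈ t, a i * s := Finset.sum_congr rfl fun i hi => by rw [hz_T i hi]
        _ = s := by rw [← Finset.sum_mul, ha1, one_mul]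
    have hxhat_norm : ∑' i, |xhat i| ≤ s := by
      have h1 : ∀ i, |xhat i| = s * |w i| := by
        intro i
        rw [hxw, Pi.smul_apply, smul_eq_mul, abs_mul, abs_of_nonneg hs0]
      calc ∑' i, |xhat i| = ∑' i, s * |w i| := tsum_congr h1
        _ = s * ∑' i, |w i| := tsum_mul_left
        _ ≤ s * 1 := mul_le_mul_of_nonneg_left hw_tsum_le hs0
        _ = s := mul_one s
    have hTx : ∑' i, U i * x i = ∑ j, c j * y j := by
      calc ∑' i, U i * x i = ∑ j, c j * ∑' i, u j i * x i := hcombo c x hx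
        _ = ∑ j, c j * y j := Finset.sum_congr rfl fun j _ => by rw [hxint j]
    have hTxhat : ∑' i, U i * xhat i = ∑ j, c j * y j := by
      calc ∑' i, U i * xhat i = ∑ j, c j * ∑' i, u j i * xhat i := hcombo c xhat hxhat
        _ = ∑ j, c j * y j := Finset.sum_congr rfl fun j _ => by rw [hint j]
    have hTxhat' : ∑' i, U i * xhat i = s * s := by
      have hterm : ∀ i, U i * xhat i = s * (U i * w i) := by
        intro i
        rw [hxw, Pi.smul_apply, smul_eq_mul]
        ring
      calc ∑' i, U i * xhat i = ∑' i, s * (U i * w i) := tsum_congr hterm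
        _ = s * ∑' i, U i * w i := tsum_mul_left
        _ = s * s := by rw [hTw]
    rcases eq_or_lt_of_le hs0 with hseq | hspos
    · have h0 : ∀ i, xhat i = 0 := by
        intro i
        rw [hxw, Pi.smul_apply, smul_eq_mul, ← hseq, zero_mul]
      have h1 : (fun i => |xhat i|) = fun _ => (0 : ℝ) :=
        funext fun i => by rw [h0 i]; simp
      calc ∑' i, |xhat i| = 0 := by rw [h1, tsum_zero]
        _ ≤ ∑' i, |x i| := tsum_nonneg fun i => abs_nonneg _
    · have hsx : s * s ≤ s * ∑' i, |x i| := by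
        have h1 : ∑ j, c j * y j ≤ |∑' i, U i * x i| := by
          rw [hTx]
          exact le_abs_self _
        have h2 : |∑' i, U i * x i| ≤ s * ∑' i, |x i| := tsum_abs_mul_le' hUb hx
        rw [← hTxhat', hTxhat]
        exact h1.trans h2
      have hsle : s ≤ ∑' i, |x i| := le_of_mul_le_mul_left hsx hspos
      exact hxhat_norm.trans hsle
end

section
/- Let X be a real Banach space, B := X* its dual, let η₁, …, η_m ∈ X be linearly independent, and let y ∈ ℝ^m with y ≠ 0. Then f̂ ∈ B is a solution of the minimum norm interpolation problem inf{‖f‖_B : f(η_j) = y_j for all j} if and only if there exists a solution ĉ ∈ ℝ^m of the dual minimization problem inf{‖Σ_{j=1}^m c_j η_j‖_X : c ∈ ℝ^m, Σ_{j=1}^m c_j y_j = 1} such that f̂(η_j) = y_j for all j and ‖Σ_j ĉ_j η_j‖_X · f̂ ∈ ∂‖·‖_X(Σ_j ĉ_j η_j). -/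
open Submodule Metric

section Aux

variable {X : Type*} [NormedAddCommGroup X] [NormedSpace ℝ X] [CompleteSpace X] {m : ℕ}

private noncomputable def Tmap (η : Fin m → X) : (Fin m → ℝ) →ₗ[ℝ] X where
  toFun c := ∑ j, c j • η j
  map_add' a b := by simp [add_smul, Finset.sum_add_distrib]
  map_smul' r a := by simp [smul_smul, Finset.smul_sum]

private lemma Tmap_apply (η : Fin m → X) (c : Fin m → ℝ) :
    Tmap η c = ∑ j, c j • η j := rfl

private lemma exists_dual_min_s13 (η : Fin m → X) (hη : LinearIndependent ℝ η)
    (y : Fin m → ℝ) (hy : y ≠ 0) :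
    ∃ chat : Fin m → ℝ, (∑ j, chat j * y j = 1) ∧
      ∀ c : Fin m → ℝ, (∑ j, c j * y j = 1) →
        ‖∑ j, chat j • η j‖ ≤ ‖∑ j, c j • η j‖ := by
  classical
  obtain ⟨j0, hj0⟩ : ∃ j, y j ≠ 0 := by
    by_contra h; push_neg at h; exact hy (funext h)
  set c₀ : Fin m → ℝ := Pi.single j0 (y j0)⁻¹ with hc₀def
  have hc₀y : ∑ j, c₀ j * y j = 1 := by
    rw [Finset.sum_eq_single j0]
    · simp [c₀, inv_mul_cancel₀ hj0]
    · intro b _ hb; simp [c₀, Pi.single_eq_of_ne hb]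
    · simp
  have hker : LinearMap.ker (Tmap η) = ⊥ := by
    rw [LinearMap.ker_eq_bot']
    intro c hc
    funext j
    exact Fintype.linearIndependent_iff.mp hη c hc j
  obtain ⟨K, hK0, hKa⟩ := (Tmap η).exists_antilipschitzWith hker
  have hbound : ∀ c : Fin m → ℝ, ‖c‖ ≤ K * ‖∑ j, c j • η j‖ := by
    intro c
    have := hKa.le_mul_dist c 0
    simpa [dist_zero_right, Tmap_apply] using this
  have hφcont : Continuous fun c : Fin m → ℝ => ‖∑ j, c j • η j‖ := by
    apply Continuous.norm
    exact continuous_finset_sum _ fun j _ => (continuous_apply j).smul continuous_const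
  set R : ℝ := K * ‖∑ j, c₀ j • η j‖ with hRdef
  set S : Set (Fin m → ℝ) := {c | ∑ j, c j * y j = 1} ∩ closedBall 0 R with hSdef
  have hSclosed : IsClosed {c : Fin m → ℝ | ∑ j, c j * y j = 1} := by
    apply isClosed_eq _ continuous_const
    exact continuous_finset_sum _ fun j _ => (continuous_apply j).mul continuous_const
  have hScompact : IsCompact S := (isCompact_closedBall 0 R).inter_left hSclosed
  have hc₀S : c₀ ∈ S := by
    refine ⟨hc₀y, ?_⟩
    rw [mem_closedBall, dist_zero_right]
    exact hbound c₀
  obtain ⟨chat, hchatS, hchatmin⟩ :=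
    hScompact.exists_isMinOn ⟨c₀, hc₀S⟩ (hφcont.continuousOn)
  refine ⟨chat, hchatS.1, ?_⟩
  intro c hc
  by_cases hcase : ‖∑ j, c j • η j‖ ≤ ‖∑ j, c₀ j • η j‖
  · have hcS : c ∈ S := by
      refine ⟨hc, ?_⟩
      rw [mem_closedBall, dist_zero_right]
      exact le_trans (hbound c) (mul_le_mul_of_nonneg_left hcase K.coe_nonneg)
    exact hchatmin hcS
  · exact le_trans (hchatmin hc₀S) (le_of_not_ge hcase)

private lemma exists_interpolant (η : Fin m → X) (hη : LinearIndependent ℝ η)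
    (y : Fin m → ℝ) (chat : Fin m → ℝ) (hc1 : ∑ j, chat j * y j = 1)
    (hmin : ∀ c : Fin m → ℝ, (∑ j, c j * y j = 1) →
      ‖∑ j, chat j • η j‖ ≤ ‖∑ j, c j • η j‖) :
    ∃ f : X →L[ℝ] ℝ, (∀ j, f (η j) = y j) ∧ ‖f‖ * ‖∑ j, chat j • η j‖ ≤ 1 := by
  classical
  set u : X := ∑ j, chat j • η j with hudef
  set μ : ℝ := ‖u‖ with hμdef
  have hu0 : u ≠ 0 := by
    intro h
    have := Fintype.linearIndependent_iff.mp hη chat h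
    rw [Finset.sum_congr rfl fun j _ => by rw [this j]] at hc1
    simp at hc1
  have hμ : 0 < μ := norm_pos_iff.mpr hu0
  have key : ∀ c : Fin m → ℝ, μ * |∑ j, c j * y j| ≤ ‖∑ j, c j • η j‖ := by
    intro c
    rcases eq_or_ne (∑ j, c j * y j) 0 with h | h
    · simp [h]
    · set t : ℝ := ∑ j, c j * y j with htdef
      have hconstr : ∑ j, (t⁻¹ * c j) * y j = 1 := by
        have h2 : ∑ j, (t⁻¹ * c j) * y j = t⁻¹ * ∑ j, c j * y j := by
          rw [Finset.mul_sum]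
          exact Finset.sum_congr rfl fun j _ => mul_assoc _ _ _
        rw [h2, ← htdef, inv_mul_cancel₀ h]
      have hμle := hmin (fun j => t⁻¹ * c j) hconstr
      simp only [← smul_smul] at hμle
      rw [← Finset.smul_sum, norm_smul, Real.norm_eq_abs, abs_inv] at hμle
      have habs : 0 < |t| := abs_pos.mpr h
      calc μ * |t| ≤ (|t|⁻¹ * ‖∑ j, c j • η j‖) * |t| :=
            mul_le_mul_of_nonneg_right hμle habs.le
        _ = ‖∑ j, c j • η j‖ := by field_simp
  haveI : FiniteDimensional ℝ (span ℝ (Set.range η)) :=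
    FiniteDimensional.span_of_finite ℝ (Set.finite_range η)
  set p : Submodule ℝ X := span ℝ (Set.range η) with hpdef
  set b : Module.Basis (Fin m) ℝ p := Module.Basis.span hη with hbdef
  have hb : ∀ j, (b j : X) = η j := fun j => congrArg Subtype.val (Module.Basis.span_apply hη j)
  set ℓ : p →L[ℝ] ℝ := LinearMap.toContinuousLinearMap (Module.Basis.constr b ℝ y) with hℓdef
  have hℓj : ∀ j, ℓ (b j) = y j := fun j => Module.Basis.constr_basis b ℝ y j
  have hℓnorm : ∀ s : p, |ℓ s| ≤ μ⁻¹ * ‖s‖ := by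
    intro s
    have hrepr : ℓ s = ∑ i, b.equivFun s i * y i := by
      simp [hℓdef, Module.Basis.constr_apply_fintype, smul_eq_mul]
    have hcoe : (s : X) = ∑ i, b.equivFun s i • η i := by
      conv_lhs => rw [← b.sum_equivFun s]
      push_cast
      exact Finset.sum_congr rfl fun i _ => by rw [hb i]
    have hkey := key (fun i => b.equivFun s i)
    rw [← hcoe] at hkey
    have hnorm : ‖(s : X)‖ = ‖s‖ := rfl
    rw [hnorm, ← hrepr] at hkey
    rw [← sub_nonneg]
    have : μ⁻¹ * (μ * |ℓ s|) ≤ μ⁻¹ * ‖s‖ := by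
      apply mul_le_mul_of_nonneg_left hkey (by positivity)
    rw [← mul_assoc, inv_mul_cancel₀ (ne_of_gt hμ), one_mul] at this
    linarith
  have hℓop : ‖ℓ‖ ≤ μ⁻¹ := by
    apply ContinuousLinearMap.opNorm_le_bound _ (by positivity)
    intro s
    simpa [Real.norm_eq_abs] using hℓnorm s
  obtain ⟨g, hg, hgnorm⟩ := exists_extension_norm_eq p ℓ
  refine ⟨g, ?_, ?_⟩
  · intro j
    have hmem : η j ∈ p := subset_span ⟨j, rfl⟩
    have h1 : η j = ((b j : p) : X) := (hb j).symm
    rw [h1, hg (b j), hℓj]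
  · rw [hgnorm]
    calc ‖ℓ‖ * μ ≤ μ⁻¹ * μ := mul_le_mul_of_nonneg_right hℓop hμ.le
      _ = 1 := inv_mul_cancel₀ (ne_of_gt hμ)

end Aux

/-- `f̂ ∈ B = X*` is a solution of the minimum norm interpolation
problem with data `y ≠ 0` iff there is a solution `ĉ` of the dual minimization problem
`inf{‖Σ c_j η_j‖_X : Σ c_j y_j = 1}` such that `f̂` interpolates and
`‖Σ ĉ_j η_j‖ • f̂ ∈ ∂‖·‖_X(Σ ĉ_j η_j)`. -/
theorem minimum_norm_interpolation_iff_dual_problem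
    {X : Type*} [NormedAddCommGroup X] [NormedSpace ℝ X] [CompleteSpace X]
    {m : ℕ} (η : Fin m → X) (hη : LinearIndependent ℝ η)
    (y : Fin m → ℝ) (hy : y ≠ 0) (fhat : X →L[ℝ] ℝ) :
    ((∀ j, fhat (η j) = y j) ∧
        ∀ f : X →L[ℝ] ℝ, (∀ j, f (η j) = y j) → ‖fhat‖ ≤ ‖f‖) ↔
      (∃ chat : Fin m → ℝ,
        ((∑ j, chat j * y j = 1) ∧
          ∀ c : Fin m → ℝ, (∑ j, c j * y j = 1) →
            ‖∑ j, chat j • η j‖ ≤ ‖∑ j, c j • η j‖) ∧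
        (∀ j, fhat (η j) = y j) ∧
        (∀ v : X, (‖∑ j, chat j • η j‖ • fhat) (v - ∑ j, chat j • η j) ≤
          ‖v‖ - ‖∑ j, chat j • η j‖)) := by
  constructor
  · rintro ⟨hint, hminf⟩
    obtain ⟨chat, hc1, hcmin⟩ := exists_dual_min_s13 η hη y hy
    refine ⟨chat, ⟨hc1, hcmin⟩, hint, ?_⟩
    set u : X := ∑ j, chat j • η j with hudef
    set μ : ℝ := ‖u‖ with hμdef
    obtain ⟨f, hfint, hfnorm⟩ := exists_interpolant η hη y chat hc1 hcmin
    have hfhatnorm : ‖fhat‖ * μ ≤ 1 :=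
      le_trans (mul_le_mul_of_nonneg_right (hminf f hfint) (norm_nonneg u)) hfnorm
    have hfu : fhat u = 1 := by
      rw [hudef, map_sum]
      rw [← hc1]
      exact Finset.sum_congr rfl fun j _ => by rw [map_smul, smul_eq_mul, hint j]
    intro v
    have h1 : (μ • fhat) (v - u) = μ * fhat v - μ * fhat u := by
      simp [mul_sub]
    rw [h1, hfu, mul_one]
    have h2 : fhat v ≤ ‖fhat‖ * ‖v‖ := le_trans (le_abs_self _) (fhat.le_opNorm v)
    nlinarith [norm_nonneg v, norm_nonneg u]
  · rintro ⟨chat, ⟨hc1, _⟩, hint, hsub⟩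
    refine ⟨hint, ?_⟩
    intro f hf
    set u : X := ∑ j, chat j • η j with hudef
    set μ : ℝ := ‖u‖ with hμdef
    have hfu : fhat u = 1 := by
      rw [hudef, map_sum, ← hc1]
      exact Finset.sum_congr rfl fun j _ => by rw [map_smul, smul_eq_mul, hint j]
    have hfu' : f u = 1 := by
      rw [hudef, map_sum, ← hc1]
      exact Finset.sum_congr rfl fun j _ => by rw [map_smul, smul_eq_mul, hf j]
    have hu0 : u ≠ 0 := by
      intro h; rw [h, map_zero] at hfu; exact one_ne_zero hfu.symm
    have hμ : 0 < μ := norm_pos_iff.mpr hu0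
    have hbd : ∀ v : X, μ * fhat v ≤ ‖v‖ := by
      intro v
      have := hsub v
      have h1 : (μ • fhat) (v - u) = μ * fhat v - μ * fhat u := by simp [mul_sub]
      rw [h1, hfu, mul_one] at this
      linarith
    have hfhatop : ‖fhat‖ ≤ μ⁻¹ := by
      apply ContinuousLinearMap.opNorm_le_bound _ (by positivity)
      intro v
      have h1 := hbd v
      have h2 := hbd (-v)
      rw [map_neg, norm_neg] at h2
      have hinv : μ⁻¹ * μ = 1 := inv_mul_cancel₀ (ne_of_gt hμ)
      have hipos : 0 < μ⁻¹ := inv_pos.mpr hμ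
      rw [Real.norm_eq_abs, abs_le]
      constructor <;> nlinarith
    have hfop : μ⁻¹ ≤ ‖f‖ := by
      have h1 : (1 : ℝ) ≤ ‖f‖ * μ := by
        calc (1:ℝ) = f u := hfu'.symm
          _ ≤ |f u| := le_abs_self _
          _ ≤ ‖f‖ * ‖u‖ := (f.le_opNorm u)
      have hinv : μ⁻¹ * μ = 1 := inv_mul_cancel₀ (ne_of_gt hμ)
      have hipos : 0 < μ⁻¹ := inv_pos.mpr hμ
      nlinarith
    exact le_trans hfhatop hfop
end

section
/- Let X be a real Banach space, B := X* its dual, let η₁, …, η_m ∈ X be linearly independent, and define L : B → ℝ^m by L(f) := (f(η_j))_{j=1}^m. Let y ∈ ℝ^m, let Q_y : ℝ^m → [0, ∞) be lower semicontinuous, let φ : [0, ∞) → [0, ∞) be lower semicontinuous, increasing, and coercive (φ(t) → ∞ as t → ∞), and let λ > 0. Then the regularization problem inf{Q_y(L(f)) + λ φ(‖f‖_B) : f ∈ B} has at least one solution, i.e. the infimum is attained at some f̂ ∈ B. -/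
open Filter Topology

/-- A lower semicontinuous real function on a nonempty compact set attains its minimum. -/
lemma lsc_exists_min {α : Type*} [TopologicalSpace α] {s : Set α} (hs : IsCompact s)
    (hne : s.Nonempty) {f : α → ℝ} (hf : LowerSemicontinuousOn f s) :
    ∃ x ∈ s, ∀ x' ∈ s, f x ≤ f x' := by
  by_contra h
  push_neg at h
  choose y hy hfy using h
  have hU : ∀ x (hx : x ∈ s), {x' | x' ∈ s → f (y x hx) < f x'} ∈ 𝓝 x := by
    intro x hx
    have h1 := hf x hx (f (y x hx)) (hfy x hx)
    rwa [eventually_nhdsWithin_iff] at h1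
  obtain ⟨t, hst⟩ := hs.elim_nhds_subcover' _ hU
  have htne : t.Nonempty := by
    obtain ⟨x, hx⟩ := hne
    obtain ⟨i, hmem, -⟩ := Set.mem_iUnion₂.1 (hst hx)
    exact ⟨i, hmem⟩
  obtain ⟨i, hit, hi⟩ := t.exists_min_image (fun i => f (y i.1 i.2)) htne
  have hyi : y i.1 i.2 ∈ s := hy i.1 i.2
  obtain ⟨j, hjt, hj⟩ := Set.mem_iUnion₂.1 (hst hyi)
  exact absurd (hi j hjt) (not_le.2 (hj hyi))

/-- The dual norm is lower semicontinuous for the weak-* topology. -/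
lemma norm_weakDual_lsc {X : Type*} [NormedAddCommGroup X] [NormedSpace ℝ X] :
    LowerSemicontinuous (fun f : WeakDual ℝ X => ‖WeakDual.toStrongDual f‖) := by
  intro f c hc
  obtain ⟨x, hx1, hx2⟩ := (WeakDual.toStrongDual f).exists_lt_apply_of_lt_opNorm hc
  have hopen : IsOpen {g : WeakDual ℝ X | c < ‖g x‖} :=
    isOpen_lt continuous_const (WeakDual.eval_continuous x).norm
  filter_upwards [hopen.mem_nhds hx2] with g hg
  calc c < ‖g x‖ := hg
    _ = ‖WeakDual.toStrongDual g x‖ := rfl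
    _ ≤ ‖WeakDual.toStrongDual g‖ * ‖x‖ := (WeakDual.toStrongDual g).le_opNorm x
    _ ≤ ‖WeakDual.toStrongDual g‖ * 1 := by
        gcongr
    _ = ‖WeakDual.toStrongDual g‖ := mul_one _

/-- Existence of a solution of the regularization problem
`inf{Q_y(L(f)) + λ φ(‖f‖) : f ∈ B}` in the dual `B = X*` of a Banach space `X`, for a
lower semicontinuous nonnegative loss `Q_y` and a lower semicontinuous, increasing,
coercive nonnegative regularizer `φ`. -/
theorem regularization_exists
    {X : Type*} [NormedAddCommGroup X] [NormedSpace ℝ X] [CompleteSpace X]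
    {m : ℕ} (η : Fin m → X) (hη : LinearIndependent ℝ η)
    (y : Fin m → ℝ) (Q : (Fin m → ℝ) → ℝ) (hQ0 : ∀ z, 0 ≤ Q z)
    (hQlsc : LowerSemicontinuous Q)
    (φ : ℝ → ℝ) (hφ0 : ∀ t : ℝ, 0 ≤ t → 0 ≤ φ t)
    (hφlsc : LowerSemicontinuousOn φ (Set.Ici 0))
    (hφmono : ∀ s t : ℝ, 0 ≤ s → s ≤ t → φ s ≤ φ t)
    (hφcoer : Tendsto φ atTop atTop)
    (lam : ℝ) (hlam : 0 < lam) :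
    ∃ fhat : X →L[ℝ] ℝ, ∀ f : X →L[ℝ] ℝ,
      Q (fun j => fhat (η j)) + lam * φ ‖fhat‖ ≤
        Q (fun j => f (η j)) + lam * φ ‖f‖ := by
  classical
  -- the objective on the weak dual
  set F : WeakDual ℝ X → ℝ :=
    fun f => Q (fun j => f (η j)) + lam * φ ‖WeakDual.toStrongDual f‖ with hF_def
  -- φ composed with the norm is weak-* lower semicontinuous
  have hφnorm : LowerSemicontinuous
      (fun f : WeakDual ℝ X => φ ‖WeakDual.toStrongDual f‖) := by
    intro f c hc
    rcases eq_or_lt_of_le (norm_nonneg (WeakDual.toStrongDual f)) with h0 | h0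
    · -- ‖f‖ = 0 : use monotonicity
      filter_upwards with g
      have := hφmono ‖WeakDual.toStrongDual f‖ ‖WeakDual.toStrongDual g‖
        (norm_nonneg _) (by rw [← h0]; exact norm_nonneg _)
      exact lt_of_lt_of_le hc this
    · -- ‖f‖ > 0 : use lsc of φ to find t₀ ∈ [0, ‖f‖) with c < φ t₀
      have hmem : Set.Ici (0 : ℝ) ∈ 𝓝 ‖WeakDual.toStrongDual f‖ := Ici_mem_nhds h0
      have hev : ∀ᶠ t in 𝓝 ‖WeakDual.toStrongDual f‖, c < φ t := by
        have := hφlsc ‖WeakDual.toStrongDual f‖ (norm_nonneg _) c hc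
        rwa [nhdsWithin_eq_nhds.2 hmem] at this
      obtain ⟨ε, hε, hball⟩ := Metric.eventually_nhds_iff.1 hev
      set t₀ : ℝ := max 0 (‖WeakDual.toStrongDual f‖ - ε / 2) with ht₀_def
      have ht₀0 : 0 ≤ t₀ := le_max_left _ _
      have ht₀lt : t₀ < ‖WeakDual.toStrongDual f‖ :=
        max_lt h0 (by linarith)
      have ht₀c : c < φ t₀ := by
        apply hball
        rw [Real.dist_eq, abs_lt]
        constructor
        · have : ‖WeakDual.toStrongDual f‖ - ε / 2 ≤ t₀ := le_max_right _ _
          linarith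
        · linarith
      filter_upwards [norm_weakDual_lsc f t₀ ht₀lt] with g hg
      exact lt_of_lt_of_le ht₀c (hφmono t₀ _ ht₀0 hg.le)
  -- F is weak-* lower semicontinuous
  have hFlsc : LowerSemicontinuous F := by
    have hQc : LowerSemicontinuous (fun f : WeakDual ℝ X => Q (fun j => f (η j))) :=
      hQlsc.comp (continuous_pi fun j => WeakDual.eval_continuous (η j))
    have hreg : LowerSemicontinuous
        (fun f : WeakDual ℝ X => lam * φ ‖WeakDual.toStrongDual f‖) := by
      intro f c hc
      have : c / lam < φ ‖WeakDual.toStrongDual f‖ := (div_lt_iff₀' hlam).2 hc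
      filter_upwards [hφnorm f _ this] with g hg
      exact (div_lt_iff₀' hlam).1 hg
    exact hQc.add hreg
  -- choose the radius R
  set C : ℝ := Q (fun _ => (0 : ℝ)) + lam * φ 0 with hC_def
  obtain ⟨R₀, hR₀⟩ := eventually_atTop.1 (hφcoer.eventually_gt_atTop (C / lam))
  set R : ℝ := max R₀ 0 with hR_def
  have hR0 : (0 : ℝ) ≤ R := le_max_right _ _
  have hRbig : ∀ t : ℝ, R ≤ t → C / lam < φ t := fun t ht =>
    hR₀ t (le_trans (le_max_left _ _) ht)
  -- the weak-* compact ball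
  set S : Set (WeakDual ℝ X) := WeakDual.toStrongDual ⁻¹' Metric.closedBall 0 R with hS_def
  have hScomp : IsCompact S := WeakDual.isCompact_closedBall (𝕜 := ℝ) 0 R
  have h0S : (0 : WeakDual ℝ X) ∈ S := by
    simp only [hS_def, Set.mem_preimage, Metric.mem_closedBall, map_zero, dist_self]
    exact hR0
  obtain ⟨g, hgS, hgmin⟩ := lsc_exists_min hScomp ⟨0, h0S⟩ (hFlsc.lowerSemicontinuousOn S)
  -- value at 0
  have hF0 : F 0 = C := by
    have h1 : (fun j => (0 : WeakDual ℝ X) (η j)) = fun _ => (0 : ℝ) := by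
      ext j; rfl
    simp only [hF_def, hC_def, h1, map_zero, norm_zero]
  have hFgC : F g ≤ C := hF0 ▸ hgmin 0 h0S
  refine ⟨WeakDual.toStrongDual g, fun f => ?_⟩
  by_cases hf : ‖f‖ ≤ R
  · -- f is in the ball
    set f' : WeakDual ℝ X := WeakDual.toStrongDual.symm f with hf'_def
    have hf'eq : WeakDual.toStrongDual f' = f := WeakDual.toStrongDual.apply_symm_apply f
    have hf'S : f' ∈ S := by
      simp only [hS_def, Set.mem_preimage, Metric.mem_closedBall, hf'eq, dist_zero_right]
      exact hf
    have := hgmin f' hf'S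
    simp only [hF_def, hf'eq] at this
    exact this
  · -- f is outside the ball
    push_neg at hf
    have h1 : C / lam < φ ‖f‖ := hRbig _ hf.le
    have h2 : C < lam * φ ‖f‖ := (div_lt_iff₀' hlam).1 h1
    have h3 : F g ≤ Q (fun j => f (η j)) + lam * φ ‖f‖ := by
      have := hQ0 (fun j => f (η j))
      linarith
    calc Q (fun j => WeakDual.toStrongDual g (η j)) + lam * φ ‖WeakDual.toStrongDual g‖
        = F g := rfl
      _ ≤ _ := h3
end

section
/- Let B be a real Banach space with dual space B*, let ν₁, …, ν_m ∈ B* be linearly independent, and define L : B → ℝ^m by L(f) := (ν_j(f))_{j=1}^m. Let y₀ ∈ ℝ^m, let Q_{y₀} : ℝ^m → [0, ∞) be a loss function, let φ : [0, ∞) → [0, ∞) be an increasing regularizer, and let λ > 0. Let f̂ ∈ B be a solution of the regularization problem inf{Q_{y₀}(L(f)) + λ φ(‖f‖_B) : f ∈ B}. Then: (1) every solution ĝ of the minimum norm interpolation problem with data y := L(f̂) (i.e., ĝ minimizes ‖·‖_B over {g ∈ B : L(g) = L(f̂)}) is also a solution of the regularization problem with data y₀; (2) if moreover φ is strictly increasing,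 then f̂ itself is a solution of the minimum norm interpolation problem with data y := L(f̂). -/
/-- Connection between the regularization problem and minimum norm
interpolation: if `f̂` solves the regularization problem with increasing regularizer
`φ`, then (1) any solution `ĝ` of the minimum norm interpolation problem with data
`L(f̂)` also solves the regularization problem; (2) if `φ` is strictly increasing, then
`f̂` itself solves the minimum norm interpolation problem with data `L(f̂)`. -/
theorem regularization_and_minimum_norm_interpolation
    {B : Type*} [NormedAddCommGroup B] [NormedSpace ℝ B] [CompleteSpace B]
    {m : ℕ} (ν : Fin m → (B →L[ℝ] ℝ)) (hν : LinearIndependent ℝ ν)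
    (y₀ : Fin m → ℝ) (Q : (Fin m → ℝ) → ℝ) (hQ0 : ∀ z, 0 ≤ Q z)
    (φ : ℝ → ℝ) (hφ0 : ∀ t : ℝ, 0 ≤ t → 0 ≤ φ t)
    (hφmono : ∀ s t : ℝ, 0 ≤ s → s ≤ t → φ s ≤ φ t)
    (lam : ℝ) (hlam : 0 < lam) (fhat : B)
    (hsol : ∀ f : B,
      Q (fun j => ν j fhat) + lam * φ ‖fhat‖ ≤ Q (fun j => ν j f) + lam * φ ‖f‖) :
    (∀ ghat : B,
        ((∀ j, ν j ghat = ν j fhat) ∧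
          ∀ g : B, (∀ j, ν j g = ν j fhat) → ‖ghat‖ ≤ ‖g‖) →
        ∀ f : B,
          Q (fun j => ν j ghat) + lam * φ ‖ghat‖ ≤
            Q (fun j => ν j f) + lam * φ ‖f‖) ∧
    ((∀ s t : ℝ, 0 ≤ s → s < t → φ s < φ t) →
      ∀ g : B, (∀ j, ν j g = ν j fhat) → ‖fhat‖ ≤ ‖g‖) := by
  constructor
  · rintro ghat ⟨hint, hmin⟩ f
    have hQeq : Q (fun j => ν j ghat) = Q (fun j => ν j fhat) := by
      congr 1; funext j; exact hint j
    have hnle : ‖ghat‖ ≤ ‖fhat‖ := hmin fhat (fun j => rfl)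
    have hφle : φ ‖ghat‖ ≤ φ ‖fhat‖ := hφmono _ _ (norm_nonneg _) hnle
    calc Q (fun j => ν j ghat) + lam * φ ‖ghat‖
        ≤ Q (fun j => ν j fhat) + lam * φ ‖fhat‖ := by
          rw [hQeq]
          exact add_le_add_right (mul_le_mul_of_nonneg_left hφle hlam.le) _
      _ ≤ Q (fun j => ν j f) + lam * φ ‖f‖ := hsol f
  · intro hstrict g hg
    by_contra h
    push_neg at h
    have hQeq : Q (fun j => ν j g) = Q (fun j => ν j fhat) := by
      congr 1; funext j; exact hg j
    have := hsol g
    rw [hQeq] at this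
    have : lam * φ ‖fhat‖ ≤ lam * φ ‖g‖ := le_of_add_le_add_left this
    have hφ : φ ‖g‖ < φ ‖fhat‖ := hstrict _ _ (norm_nonneg _) h
    nlinarith
end
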